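/- arXiv:1210.7119 — 4 statements merged into one kernel-verified Lean document; each statement's English description precedes it below -/
import Mathlib

section
/- Let w = w_1...w_m and v = v_1...v_m be reduced words such that for all i, either v_i = w_i or v_i = w_i − 1 (i.e., each entry is decremented at most once, as in a Little bump). Then for all i, v_i > v_{i+1} if and only if w_i > w_{i+1}; in particular v and w have the same descent set. -/
/-- The adjacent transposition `sᵢ = (i, i+1)` acting on `ℕ` (positions `1, …, n` are used). -/
def sgen (i : ℕ) : Equiv.Perm ℕ := Equiv.swap i (i + 1)

/-- The permutation represented by a word `w = w₁ w₂ … w_m`, namely `s_{w₁} s_{w₂} ⋯ s_{w_m}`. -/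
def wordPerm (w : List ℕ) : Equiv.Perm ℕ := (w.map sgen).prod

/-- A word is reduced if it has minimal length among all words representing the same
permutation. -/
def IsReducedWord (w : List ℕ) : Prop :=
  ∀ v : List ℕ, wordPerm v = wordPerm w → w.length ≤ v.length

/-- `w` is a reduced word of the permutation `σ`. -/
def IsReducedWordOf (σ : Equiv.Perm ℕ) (w : List ℕ) : Prop :=
  wordPerm w = σ ∧ IsReducedWord w

lemma wordPerm_append (a b : List ℕ) : wordPerm (a ++ b) = wordPerm a * wordPerm b := by
  simp [wordPerm, List.map_append, List.prod_append]

lemma sgen_mul_self (x : ℕ) : sgen x * sgen x = 1 := by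
  simp [sgen, Equiv.swap_mul_self]

lemma reduced_no_adj_eq (w : List ℕ) (hw : IsReducedWord w) (i : ℕ) (h : i + 1 < w.length) :
    w.getD i 0 ≠ w.getD (i + 1) 0 := by
  intro heq
  have hi : i < w.length := by omega
  have hdecomp : w = w.take i ++ w.getD i 0 :: w.getD (i + 1) 0 :: w.drop (i + 2) := by
    conv_lhs => rw [← List.take_append_drop i w]
    congr 1
    rw [List.drop_eq_getElem_cons hi, List.drop_eq_getElem_cons h]
    rw [List.getD_eq_getElem w 0 hi, List.getD_eq_getElem w 0 h]
  have hperm : wordPerm (w.take i ++ w.drop (i + 2)) = wordPerm w := by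
    conv_rhs => rw [hdecomp]
    rw [wordPerm_append, wordPerm_append]
    have : wordPerm (w.getD i 0 :: w.getD (i + 1) 0 :: w.drop (i + 2)) =
        sgen (w.getD i 0) * (sgen (w.getD (i + 1) 0) * wordPerm (w.drop (i + 2))) := by
      simp [wordPerm, mul_assoc]
    rw [this, ← heq, ← mul_assoc (sgen (w.getD i 0)), sgen_mul_self, one_mul]
  have hle := hw _ hperm
  have : (w.take i ++ w.drop (i + 2)).length = w.length - 2 := by
    simp [List.length_take, List.length_drop]
    omega
  omega

/-- If `v` and `w` are reduced words of the same length such that each entry of `v` equals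
the corresponding entry of `w` or that entry decremented by one (as in a Little bump),
then `v` and `w` have the same descent set. -/
theorem little_bump_preserves_descents (w v : List ℕ)
    (hlen : v.length = w.length)
    (hw : IsReducedWord w) (hv : IsReducedWord v)
    (hdec : ∀ i : ℕ, i < w.length → v.getD i 0 = w.getD i 0 ∨ v.getD i 0 + 1 = w.getD i 0) :
    ∀ i : ℕ, i + 1 < w.length →
      (v.getD (i + 1) 0 < v.getD i 0 ↔ w.getD (i + 1) 0 < w.getD i 0) := by
  intro i h
  have h1 := hdec i (by omega)
  have h2 := hdec (i + 1) h
  have hwne := reduced_no_adj_eq w hw i h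
  have hvne := reduced_no_adj_eq v hv i (by omega)
  omega
end

section
/- The map sending a reduced word w of a fixed Grassmannian permutation σ (with descent at position k and shape λ) to the tableau Tab(w), whose (row, column) cell indexed by (a_i, b_j) contains m+1−l when the l-th letter of w exchanges a_i and b_j, is a bijection between reduced words of σ and standard Young tableaux of shape λ. -/
/-- The (values of the) pair of wires crossing at step `t` (0-indexed) of the wiring diagram
of the word `w`: the values in positions `w_t` and `w_t + 1` just before step `t`. -/
def crossing (w : List ℕ) (t : ℕ) : ℕ × ℕ :=
  (wordPerm (w.take t) (w.getD t 0), wordPerm (w.take t) (w.getD t 0 + 1))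

/-- Two ordered pairs represent the same unordered crossing. -/
def SameCross (p q : ℕ × ℕ) : Prop := p = q ∨ p = (q.2, q.1)

instance (p q : ℕ × ℕ) : Decidable (SameCross p q) := by
  unfold SameCross; infer_instance
/-- The tableau `Tab(w)` of a reduced word `w` of a Grassmannian permutation with descent at
position `k` (positions are 1-indexed; cells `(r, c)` are 0-indexed).  The cell `(r, c)`
corresponds to the inversion exchanging the values in positions `k - r` and `k + 1 + c`;
if that exchange happens at step `t` (0-indexed), the entry is `m - t`. -/
def tabFun (w : List ℕ) (k : ℕ) : ℕ × ℕ → ℕ := fun rc =>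
  ∑ t ∈ Finset.range w.length,
    if rc.1 < k ∧
        SameCross (crossing w t)
          (wordPerm w (k - rc.1), wordPerm w (k + 1 + rc.2)) then
      w.length - t
    else 0

/-- `f : ℕ × ℕ → ℕ` is a standard Young tableau on the set of cells `C`: it vanishes
off `C`, maps `C` bijectively onto `{1, …, |C|}`, and strictly increases along rows and
down columns. -/
def IsSYTon (C : Finset (ℕ × ℕ)) (f : ℕ × ℕ → ℕ) : Prop :=
  (∀ c, c ∉ C → f c = 0) ∧
  Set.BijOn f (↑C) (↑(Finset.Icc 1 C.card)) ∧
  (∀ c ∈ C, ∀ d ∈ C, c.1 = d.1 → c.2 < d.2 → f c < f d) ∧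
  (∀ c ∈ C, ∀ d ∈ C, c.2 = d.2 → c.1 < d.1 → f c < f d)

/-- The cells of the shape `λ` of a Grassmannian permutation `σ` with descent at `k`:
cell `(r, c)` (0-indexed) corresponds to the inversion exchanging the values in
positions `k − r` and `k + 1 + c`. -/
def invCells (σ : Equiv.Perm ℕ) (n k : ℕ) : Finset (ℕ × ℕ) :=
  (Finset.range n ×ˢ Finset.range n).filter
    (fun rc => rc.1 < k ∧ k + 1 + rc.2 ≤ n ∧ σ (k + 1 + rc.2) < σ (k - rc.1))


lemma sgen_apply (j x : ℕ) : sgen j x = if x = j then j + 1 else if x = j + 1 then j else x := by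
  simp [sgen, Equiv.swap_apply_def]

def invSet (π : Equiv.Perm ℕ) : Set (ℕ × ℕ) := {pq | pq.1 < pq.2 ∧ π pq.2 < π pq.1}

lemma wordPerm_nil : wordPerm [] = 1 := rfl
lemma wordPerm_cons (j : ℕ) (w : List ℕ) : wordPerm (j :: w) = sgen j * wordPerm w := by
  simp [wordPerm]

lemma sgen_lt_sgen {j u v : ℕ} (h1 : ¬(u = j ∧ v = j + 1)) (h2 : ¬(u = j + 1 ∧ v = j)) :
    sgen j u < sgen j v ↔ u < v := by
  rw [sgen_apply, sgen_apply]
  split_ifs <;> omega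

lemma invSet_one : invSet 1 = ∅ := by
  ext ⟨p, q⟩; simp [invSet]; omega

/-- the pair toggled by left multiplication by `sgen j`. -/
def togglePair (π : Equiv.Perm ℕ) (j : ℕ) : ℕ × ℕ :=
  if π.symm j < π.symm (j + 1) then (π.symm j, π.symm (j + 1)) else (π.symm (j + 1), π.symm j)

lemma invSet_sgen_subset (π : Equiv.Perm ℕ) (j : ℕ) :
    invSet (sgen j * π) ⊆ insert (togglePair π j) (invSet π) := by
  rintro ⟨p, q⟩ ⟨hpq, hlt⟩
  simp only [Equiv.Perm.mul_apply] at hlt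
  by_cases h1 : π q = j ∧ π p = j + 1
  · left
    have hp : p = π.symm (j+1) := by rw [← h1.2]; simp
    have hq : q = π.symm j := by rw [← h1.1]; simp
    rw [togglePair]
    split_ifs with h
    · omega
    · rw [hp, hq]
  by_cases h2 : π q = j + 1 ∧ π p = j
  · left
    have hp : p = π.symm j := by rw [← h2.2]; simp
    have hq : q = π.symm (j+1) := by rw [← h2.1]; simp
    rw [togglePair]
    split_ifs with h
    · rw [hp, hq]
    · omega
  · right
    exact ⟨hpq, (sgen_lt_sgen h1 h2).mp hlt⟩

lemma invSet_finite_le (w : List ℕ) :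
    (invSet (wordPerm w)).Finite ∧ (invSet (wordPerm w)).ncard ≤ w.length := by
  induction w with
  | nil => rw [wordPerm_nil, invSet_one]; simp
  | cons j w ih =>
    rw [wordPerm_cons]
    have hsub := invSet_sgen_subset (wordPerm w) j
    have hfin : (insert (togglePair (wordPerm w) j) (invSet (wordPerm w))).Finite :=
      ih.1.insert _
    refine ⟨hfin.subset hsub, ?_⟩
    calc (invSet (sgen j * wordPerm w)).ncard ≤ _ := Set.ncard_le_ncard hsub hfin
      _ ≤ (invSet (wordPerm w)).ncard + 1 := Set.ncard_insert_le _ _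
      _ ≤ w.length + 1 := by omega
      _ = (j :: w).length := rfl

lemma invSet_insert_of_noninv {π : Equiv.Perm ℕ} {j p q : ℕ}
    (hp : π p = j) (hq : π q = j + 1) (hpq : p < q) :
    insert (p, q) (invSet π) ⊆ invSet (sgen j * π) ∧ (p, q) ∉ invSet π := by
  constructor
  · rintro ⟨r, s⟩ hrs
    rcases hrs with h | ⟨hrs, hlt⟩
    · rw [Prod.ext_iff] at h
      obtain ⟨h1, h2⟩ := h
      subst h1; subst h2
      refine ⟨hpq, ?_⟩
      simp only [Equiv.Perm.mul_apply, hp, hq, sgen_apply]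
      simp
    · dsimp only at hrs hlt
      refine ⟨hrs, ?_⟩
      simp only [Equiv.Perm.mul_apply]
      have h1 : ¬(π s = j ∧ π r = j + 1) := by
        rintro ⟨e1, e2⟩
        have hsp : s = p := π.injective (by rw [e1, hp])
        have hrq : r = q := π.injective (by rw [e2, hq])
        omega
      have h2 : ¬(π s = j + 1 ∧ π r = j) := by
        rintro ⟨e1, e2⟩
        have hsq : s = q := π.injective (by rw [e1, hq])
        have hrp : r = p := π.injective (by rw [e2, hp])
        omega
      exact (sgen_lt_sgen h1 h2).mpr hlt
  · rintro ⟨-, hlt⟩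
    rw [hp, hq] at hlt; omega

lemma mem_invCells (σ : Equiv.Perm ℕ) (n k : ℕ) {rc : ℕ × ℕ} :
    rc ∈ invCells σ n k ↔ rc.1 < n ∧ rc.2 < n ∧ rc.1 < k ∧ k + 1 + rc.2 ≤ n ∧
      σ (k + 1 + rc.2) < σ (k - rc.1) := by
  simp [invCells, Finset.mem_filter, Finset.mem_product, and_assoc]

lemma card_invCells_le_ncard (σ : Equiv.Perm ℕ) (n k : ℕ) (hfin : (invSet σ).Finite) :
    (invCells σ n k).card ≤ (invSet σ).ncard := by
  rw [Set.ncard_eq_toFinset_card _ hfin]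
  apply Finset.card_le_card_of_injOn (fun rc => (k - rc.1, k + 1 + rc.2))
  · intro rc hrc
    rw [Finset.mem_coe, mem_invCells] at hrc
    rw [Finset.mem_coe, Set.Finite.mem_toFinset]
    exact ⟨by dsimp only; omega, hrc.2.2.2.2⟩
  · intro a ha b hb hab
    rw [Finset.mem_coe, mem_invCells] at ha hb
    rw [Prod.ext_iff] at hab ⊢
    dsimp at hab
    omega

section Struct
variable {σ : Equiv.Perm ℕ} {n k : ℕ}

-- hypotheses: hfix : ∀ i, i = 0 ∨ n < i → σ i = i
--             hmono : ∀ i, 1 ≤ i → i ≠ k → i + 1 ≤ n → σ i < σ (i + 1)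

lemma sig_zero (hfix : ∀ i, i = 0 ∨ n < i → σ i = i) : σ 0 = 0 := hfix 0 (Or.inl rfl)

lemma sig_le (hfix : ∀ i, i = 0 ∨ n < i → σ i = i) {x : ℕ} (hx : x ≤ n) : σ x ≤ n := by
  by_contra h
  push_neg at h
  have h2 := hfix (σ x) (Or.inr h)
  have := σ.injective h2
  omega

lemma sig_pos (hfix : ∀ i, i = 0 ∨ n < i → σ i = i) {x : ℕ} (hx : 1 ≤ x) : 1 ≤ σ x := by
  rcases Nat.eq_zero_or_pos (σ x) with h | h
  · have : x = 0 := σ.injective (h.trans (sig_zero hfix).symm)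
    omega
  · exact h

lemma mono1 (hfix : ∀ i, i = 0 ∨ n < i → σ i = i)
    (hmono : ∀ i, 1 ≤ i → i ≠ k → i + 1 ≤ n → σ i < σ (i + 1))
    (hkn : k < n) :
    ∀ y, y ≤ k → ∀ x, x < y → σ x < σ y := by
  intro y
  induction y with
  | zero => omega
  | succ y ih =>
    intro hy x hx
    have hstep : σ y < σ (y + 1) := by
      rcases Nat.eq_zero_or_pos y with h | h
      · subst h
        rw [sig_zero hfix]
        exact sig_pos hfix le_rfl
      · exact hmono y h (by omega) (by omega)
    rcases Nat.lt_succ_iff_lt_or_eq.mp hx with h | h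
    · exact (ih (by omega) x h).trans hstep
    · subst h; exact hstep

lemma mono2 (hmono : ∀ i, 1 ≤ i → i ≠ k → i + 1 ≤ n → σ i < σ (i + 1))
    (hk1 : 1 ≤ k) :
    ∀ y, y ≤ n → ∀ x, k + 1 ≤ x → x < y → σ x < σ y := by
  intro y
  induction y with
  | zero => omega
  | succ y ih =>
    intro hy x hx hxy
    have hstep : σ y < σ (y + 1) := hmono y (by omega) (by omega) (by omega)
    rcases Nat.lt_succ_iff_lt_or_eq.mp hxy with h | h
    · exact (ih (by omega) x hx h).trans hstep
    · subst h; exact hstep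

lemma corner_succ (hfix : ∀ i, i = 0 ∨ n < i → σ i = i)
    (hmono : ∀ i, 1 ≤ i → i ≠ k → i + 1 ≤ n → σ i < σ (i + 1))
    (hk1 : 1 ≤ k) (hkn : k < n)
    {p q : ℕ} (hp1 : 1 ≤ p) (hpk : p ≤ k) (hkq : k < q) (hqn : q ≤ n)
    (hinv : σ q < σ p)
    (hR : q = n ∨ σ p < σ (q + 1))
    (hB : p = 1 ∨ σ (p - 1) < σ q) :
    σ p = σ q + 1 := by
  by_contra hne
  have hgap : σ q + 1 < σ p := by omega
  set v := σ p - 1 with hv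
  have hvn : v ≤ n := by have := sig_le hfix hqn; have := sig_le hfix (le_of_lt (lt_of_le_of_lt hpk hkn)); omega
  set p' := σ.symm v with hp'
  have hσp' : σ p' = v := σ.apply_symm_apply v
  have hp'n : p' ≤ n := by
    by_contra h
    push_neg at h
    have := hfix p' (Or.inr h)
    omega
  have hp'0 : 1 ≤ p' := by
    rcases Nat.eq_zero_or_pos p' with h | h
    · rw [h, sig_zero hfix] at hσp'
      have := sig_pos hfix hp1
      omega
    · exact h
  rcases le_or_gt p' k with hc | hc
  · -- p' in first block
    have hp'p : p' < p := by
      rcases lt_trichotomy p' p with h | h | h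
      · exact h
      · exfalso; rw [h] at hσp'; omega
      · exfalso
        have := mono1 hfix hmono hkn p' hc p h
        omega
    have hB' : σ (p - 1) < σ q := by
      rcases hB with h | h
      · omega
      · exact h
    have hle : σ p' ≤ σ (p - 1) := by
      rcases lt_trichotomy p' (p - 1) with h | h | h
      · exact le_of_lt (mono1 hfix hmono hkn (p - 1) (by omega) p' h)
      · rw [h]
      · omega
    omega
  · -- p' in second block
    have hqp' : q < p' := by
      rcases lt_trichotomy p' q with h | h | h
      · exfalso
        have := mono2 hmono hk1 q hqn p' (by omega) h
        omega
      · exfalso; rw [h] at hσp'; omega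
      · exact h
    have hR' : σ p < σ (q + 1) := by
      rcases hR with h | h
      · omega
      · exact h
    have hle : σ (q + 1) ≤ σ p' := by
      rcases lt_trichotomy (q + 1) p' with h | h | h
      · exact le_of_lt (mono2 hmono hk1 p' hp'n (q + 1) (by omega) h)
      · rw [h]
      · omega
    omega
end Struct

section Step
variable {σ : Equiv.Perm ℕ} {n k p q j : ℕ}

lemma step_apply (hσp : σ p = j + 1) (hσq : σ q = j) (x : ℕ) :
    (sgen j * σ) x = if x = p then j else if x = q then j + 1 else σ x := by
  rw [Equiv.Perm.mul_apply, sgen_apply]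
  have hpq : p ≠ q := fun h => by rw [h, hσq] at hσp; omega
  rcases eq_or_ne x p with rfl | hxp
  · rw [hσp, if_neg (by omega), if_pos rfl, if_pos rfl]
  · rcases eq_or_ne x q with rfl | hxq
    · rw [hσq, if_pos rfl, if_neg hxp, if_pos rfl]
    · have t1 : σ x ≠ j := fun hh => hxq (σ.injective (hh.trans hσq.symm))
      have t2 : σ x ≠ j + 1 := fun hh => hxp (σ.injective (hh.trans hσp.symm))
      rw [if_neg t1, if_neg t2, if_neg hxp, if_neg hxq]

lemma step_fix (hfix : ∀ i, i = 0 ∨ n < i → σ i = i)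
    (hσp : σ p = j + 1) (hσq : σ q = j)
    (hp1 : 1 ≤ p) (hpk : p ≤ k) (hkq : k < q) (hqn : q ≤ n) (hkn : k < n) :
    ∀ i, i = 0 ∨ n < i → (sgen j * σ) i = i := by
  intro i hi
  rw [step_apply hσp hσq]
  have : i ≠ p := by rcases hi with h | h <;> omega
  have : i ≠ q := by rcases hi with h | h <;> omega
  rw [if_neg ‹i ≠ p›, if_neg ‹i ≠ q›]
  exact hfix i hi

lemma step_mono (hfix : ∀ i, i = 0 ∨ n < i → σ i = i)
    (hmono : ∀ i, 1 ≤ i → i ≠ k → i + 1 ≤ n → σ i < σ (i + 1))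
    (hσp : σ p = j + 1) (hσq : σ q = j)
    (hp1 : 1 ≤ p) (hpk : p ≤ k) (hkq : k < q) (hqn : q ≤ n) :
    ∀ i, 1 ≤ i → i ≠ k → i + 1 ≤ n → (sgen j * σ) i < (sgen j * σ) (i + 1) := by
  intro i h1 h2 h3
  have hf := hmono i h1 h2 h3
  rw [step_apply hσp hσq, step_apply hσp hσq]
  rcases eq_or_ne i p with rfl | hip
  · rcases eq_or_ne (i + 1) q with he | he
    · rw [if_pos rfl, if_neg (by omega), if_pos he]
      omega
    · rw [if_pos rfl, if_neg (by omega), if_neg he]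
      omega
  · rcases eq_or_ne i q with rfl | hiq
    · have e1 : i + 1 ≠ p := by omega
      have e2 : i + 1 ≠ i := by omega
      rw [if_neg hip, if_pos rfl, if_neg e1, if_neg e2]
      have hx : σ (i + 1) ≠ j + 1 := fun hh => by have := σ.injective (hh.trans hσp.symm); omega
      omega
    · rcases eq_or_ne (i + 1) p with he | he
      · rw [if_neg hip, if_neg hiq, if_pos he]
        have : σ i ≠ j := fun hh => hiq (σ.injective (hh.trans hσq.symm))
        have : σ (i + 1) = j + 1 := by rw [he, hσp]
        omega
      · rcases eq_or_ne (i + 1) q with he2 | he2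
        · rw [if_neg hip, if_neg hiq, if_neg he, if_pos he2]
          have : σ (i + 1) = j := by rw [he2, hσq]
          omega
        · rw [if_neg hip, if_neg hiq, if_neg he, if_neg he2]
          exact hf

lemma invCells_step (hσp : σ p = j + 1) (hσq : σ q = j)
    (hp1 : 1 ≤ p) (hpk : p ≤ k) (hkq : k < q) (hqn : q ≤ n) :
    invCells (sgen j * σ) n k = (invCells σ n k).erase (k - p, q - k - 1) := by
  ext ⟨r, c⟩
  rw [Finset.mem_erase, mem_invCells, mem_invCells]
  rw [step_apply hσp hσq, step_apply hσp hσq]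
  have hcp : k + 1 + c ≠ p := by omega
  have hrq : k - r ≠ q := by omega
  rw [if_neg hcp, if_neg hrq]
  simp only [Ne, Prod.mk.injEq, not_and]
  by_cases h1 : k - r = p <;> by_cases h2 : k + 1 + c = q
  · rw [if_pos h2, if_pos h1]
    omega
  · rw [if_neg h2, if_pos h1]
    have hσr : σ (k - r) = j + 1 := by rw [h1, hσp]
    have hne : σ (k + 1 + c) ≠ j := fun hh => h2 (σ.injective (hh.trans hσq.symm))
    omega
  · rw [if_pos h2, if_neg h1]
    have hσc : σ (k + 1 + c) = j := by rw [h2, hσq]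
    have hne2 : σ (k - r) ≠ j + 1 := fun hh => h1 (σ.injective (hh.trans hσp.symm))
    omega
  · rw [if_neg h2, if_neg h1]
    have hne : σ (k + 1 + c) ≠ j := fun hh => h2 (σ.injective (hh.trans hσq.symm))
    have hne2 : σ (k - r) ≠ j + 1 := fun hh => h1 (σ.injective (hh.trans hσp.symm))
    omega

lemma corner_mem (hσp : σ p = j + 1) (hσq : σ q = j)
    (hp1 : 1 ≤ p) (hpk : p ≤ k) (hkq : k < q) (hqn : q ≤ n) (hkn : k < n) :
    (k - p, q - k - 1) ∈ invCells σ n k := by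
  rw [mem_invCells]
  have e1 : k + 1 + (q - k - 1) = q := by omega
  have e2 : k - (k - p) = p := by omega
  rw [e1, e2, hσp, hσq]
  exact ⟨by omega, by omega, by omega, by omega, by omega⟩
end Step


section Exists
variable {σ : Equiv.Perm ℕ} {n k : ℕ}

lemma adj_all (hfix : ∀ i, i = 0 ∨ n < i → σ i = i)
    (hmono : ∀ i, 1 ≤ i → i ≠ k → i + 1 ≤ n → σ i < σ (i + 1))
    (hk1 : 1 ≤ k) (hkn : k < n)
    (hemp : invCells σ n k = ∅) : ∀ i, i < n → σ i < σ (i + 1) := by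
  intro i hi
  rcases Nat.eq_zero_or_pos i with rfl | h1
  · rw [sig_zero hfix]
    exact sig_pos hfix le_rfl
  rcases eq_or_ne i k with h2 | h2
  · subst h2
    by_contra hcon
    push_neg at hcon
    have hne : σ (i + 1) ≠ σ i := fun hh => by have := σ.injective hh; omega
    have hmem : ((0, 0) : ℕ × ℕ) ∈ invCells σ n i := by
      rw [mem_invCells]
      dsimp only
      refine ⟨by omega, by omega, by omega, by omega, ?_⟩
      have e1 : i + 1 + 0 = i + 1 := by omega
      have e2 : i - 0 = i := by omega
      rw [e1, e2]
      omega
    rw [hemp] at hmem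
    simp at hmem
  · exact hmono i h1 h2 (by omega)

lemma sig_eq_one (hfix : ∀ i, i = 0 ∨ n < i → σ i = i)
    (hmono : ∀ i, 1 ≤ i → i ≠ k → i + 1 ≤ n → σ i < σ (i + 1))
    (hk1 : 1 ≤ k) (hkn : k < n)
    (hemp : invCells σ n k = ∅) : σ = 1 := by
  have hadj := adj_all hfix hmono hk1 hkn hemp
  have hge : ∀ i, i ≤ n → i ≤ σ i := by
    intro i
    induction i with
    | zero => intro _; omega
    | succ i ih =>
      intro h
      have h1 := hadj i (by omega)
      have h2 := ih (by omega)
      omega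
  have hle' : ∀ d i, i ≤ n → n - d ≤ i → σ i = i := by
    intro d
    induction d with
    | zero =>
      intro i h1 h2
      have hin : i = n := by omega
      have h3 := sig_le hfix h1
      have h4 := hge i h1
      omega
    | succ d ih =>
      intro i h1 h2
      by_cases h : n - d ≤ i
      · exact ih i h1 h
      · have hin : i < n := by omega
        have hnext : σ (i + 1) = i + 1 := ih (i + 1) (by omega) (by omega)
        have := hadj i hin
        have := hge i (by omega)
        omega
  apply Equiv.ext
  intro i
  rcases le_or_gt i n with h | h
  · simpa using hle' n i h (by omega)
  · simpa using hfix i (Or.inr h)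

lemma min_length (σ : Equiv.Perm ℕ) (n k : ℕ) :
    ∀ v : List ℕ, wordPerm v = σ → (invCells σ n k).card ≤ v.length := by
  intro v hv
  have h := invSet_finite_le v
  rw [hv] at h
  exact le_trans (card_invCells_le_ncard σ n k h.1) h.2

lemma exists_corner (hfix : ∀ i, i = 0 ∨ n < i → σ i = i)
    (hmono : ∀ i, 1 ≤ i → i ≠ k → i + 1 ≤ n → σ i < σ (i + 1))
    (hk1 : 1 ≤ k) (hkn : k < n)
    (hne : (invCells σ n k).Nonempty) :
    ∃ p q j, 1 ≤ p ∧ p ≤ k ∧ k < q ∧ q ≤ n ∧ σ p = j + 1 ∧ σ q = j := by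
  classical
  obtain ⟨x0, hx0⟩ := hne
  set C := invCells σ n k with hC
  have hne1 : (C.image Prod.fst).Nonempty := ⟨x0.1, Finset.mem_image_of_mem _ hx0⟩
  set r := (C.image Prod.fst).max' hne1 with hr
  obtain ⟨y, hy, hyr⟩ := Finset.mem_image.mp ((C.image Prod.fst).max'_mem hne1)
  set row := C.filter (fun z => z.1 = r) with hrowdef
  have hne2 : (row.image Prod.snd).Nonempty :=
    ⟨y.2, Finset.mem_image_of_mem _ (Finset.mem_filter.mpr ⟨hy, hyr⟩)⟩
  set c := (row.image Prod.snd).max' hne2 with hcdef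
  obtain ⟨z, hz, hzc⟩ := Finset.mem_image.mp ((row.image Prod.snd).max'_mem hne2)
  rw [Finset.mem_filter] at hz
  have hmem : (r, c) ∈ C := by
    have hzz : z = (r, c) := Prod.ext hz.2 hzc
    rw [← hzz]
    exact hz.1
  have hmax1 : ∀ w ∈ C, w.1 ≤ r := fun w hw => Finset.le_max' _ _ (Finset.mem_image_of_mem _ hw)
  have hmax2 : ∀ w ∈ C, w.1 = r → w.2 ≤ c := fun w hw h =>
    Finset.le_max' _ _ (Finset.mem_image_of_mem _ (Finset.mem_filter.mpr ⟨hw, h⟩))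
  rw [hC, mem_invCells] at hmem
  dsimp only at hmem
  obtain ⟨hrn, hcn, hrk, hqn, hinv⟩ := hmem
  refine ⟨k - r, k + 1 + c, σ (k + 1 + c), by omega, by omega, by omega, hqn, ?_, rfl⟩
  apply corner_succ hfix hmono hk1 hkn (by omega) (by omega) (by omega) hqn hinv
  · rcases eq_or_ne (k + 1 + c) n with h | h
    · exact Or.inl h
    · right
      have hnot : ((r, c + 1)) ∉ C := by
        intro hmem2
        have := hmax2 _ hmem2 rfl
        omega
      rw [hC, mem_invCells] at hnot
      dsimp only at hnot
      push_neg at hnot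
      have hle := hnot (by omega) (by omega) (by omega) (by omega)
      have e : k + 1 + (c + 1) = k + 1 + c + 1 := by omega
      rw [e] at hle
      have hne3 : σ (k - r) ≠ σ (k + 1 + c + 1) := fun hh => by
        have := σ.injective hh; omega
      omega
  · rcases eq_or_ne (k - r) 1 with h | h
    · exact Or.inl h
    · right
      have hnot : ((r + 1, c)) ∉ C := by
        intro hmem2
        have := hmax1 _ hmem2
        dsimp only at this
        omega
      rw [hC, mem_invCells] at hnot
      dsimp only at hnot
      push_neg at hnot
      have hle := hnot (by omega) (by omega) (by omega) (by omega)
      have e : k - (r + 1) = k - r - 1 := by omega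
      rw [e] at hle
      have hne3 : σ (k - r - 1) ≠ σ (k + 1 + c) := fun hh => by
        have := σ.injective hh; omega
      omega

lemma exists_word (hk1 : 1 ≤ k) (hkn : k < n) :
    ∀ m : ℕ, ∀ σ : Equiv.Perm ℕ, (invCells σ n k).card = m →
      (∀ i, i = 0 ∨ n < i → σ i = i) →
      (∀ i, 1 ≤ i → i ≠ k → i + 1 ≤ n → σ i < σ (i + 1)) →
      ∃ w : List ℕ, wordPerm w = σ ∧ w.length = m := by
  intro m
  induction m using Nat.strong_induction_on with
  | _ m ih =>
  intro σ hcard hfix hmono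
  rcases Nat.eq_zero_or_pos m with rfl | hm
  · refine ⟨[], ?_, rfl⟩
    rw [wordPerm_nil]
    exact (sig_eq_one hfix hmono hk1 hkn (Finset.card_eq_zero.mp hcard)).symm
  · have hne : (invCells σ n k).Nonempty := Finset.card_pos.mp (by omega)
    obtain ⟨p, q, j, hp1, hpk, hkq, hqn, hσp, hσq⟩ := exists_corner hfix hmono hk1 hkn hne
    have hcard' : (invCells (sgen j * σ) n k).card = m - 1 := by
      rw [invCells_step hσp hσq hp1 hpk hkq hqn,
        Finset.card_erase_of_mem (corner_mem hσp hσq hp1 hpk hkq hqn hkn), hcard]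
    obtain ⟨w', hw1, hw2⟩ := ih (m - 1) (by omega) _ hcard'
      (step_fix hfix hσp hσq hp1 hpk hkq hqn hkn)
      (step_mono hfix hmono hσp hσq hp1 hpk hkq hqn)
    refine ⟨j :: w', ?_, by simp [hw2]; omega⟩
    rw [wordPerm_cons, hw1, ← mul_assoc,
      show sgen j * sgen j = 1 from Equiv.swap_mul_self _ _, one_mul]

lemma reduced_iff (hk1 : 1 ≤ k) (hkn : k < n)
    (hfix : ∀ i, i = 0 ∨ n < i → σ i = i)
    (hmono : ∀ i, 1 ≤ i → i ≠ k → i + 1 ≤ n → σ i < σ (i + 1)) (w : List ℕ) :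
    IsReducedWordOf σ w ↔ wordPerm w = σ ∧ w.length = (invCells σ n k).card := by
  obtain ⟨v, hv1, hv2⟩ := exists_word hk1 hkn _ σ rfl hfix hmono
  constructor
  · rintro ⟨h1, h2⟩
    refine ⟨h1, le_antisymm ?_ (min_length σ n k w h1)⟩
    have := h2 v (by rw [hv1, h1])
    omega
  · rintro ⟨h1, h2⟩
    refine ⟨h1, fun u hu => ?_⟩
    have := min_length σ n k u (by rw [hu, h1])
    omega

lemma first_letter (hk1 : 1 ≤ k) (hkn : k < n)
    (hfix : ∀ i, i = 0 ∨ n < i → σ i = i)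
    (hmono : ∀ i, 1 ≤ i → i ≠ k → i + 1 ≤ n → σ i < σ (i + 1))
    {j : ℕ} {w' : List ℕ}
    (hred : IsReducedWordOf σ (j :: w')) :
    ∃ p q, σ p = j + 1 ∧ σ q = j ∧ 1 ≤ p ∧ p ≤ k ∧ k < q ∧ q ≤ n ∧
      wordPerm w' = sgen j * σ := by
  obtain ⟨hw, hlen⟩ := (reduced_iff hk1 hkn hfix hmono _).mp hred
  set m := (invCells σ n k).card with hm
  have hlen' : w'.length = m - 1 ∧ 1 ≤ m := by simp at hlen; omega
  have hw2 : sgen j * wordPerm w' = σ := by rw [← wordPerm_cons, hw]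
  have hw' : wordPerm w' = sgen j * σ := by
    rw [← hw2, ← mul_assoc, show sgen j * sgen j = 1 from Equiv.swap_mul_self _ _, one_mul]
  set p := σ.symm (j + 1) with hpdef
  set q := σ.symm j with hqdef
  have hσp : σ p = j + 1 := σ.apply_symm_apply _
  have hσq : σ q = j := σ.apply_symm_apply _
  have hpqne : p ≠ q := fun h => by rw [h, hσq] at hσp; omega
  have hpq : p < q := by
    by_contra hcon
    push_neg at hcon
    have hqp : q < p := by omega
    obtain ⟨hsub, hnotin⟩ := invSet_insert_of_noninv hσq hσp hqp
    have hfin' := invSet_finite_le w'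
    rw [hw'] at hfin'
    have hfinσ : (invSet σ).Finite :=
      hfin'.1.subset (Set.Subset.trans (Set.subset_insert _ _) hsub)
    have h1 : m ≤ (invSet σ).ncard := card_invCells_le_ncard σ n k hfinσ
    have h2 : (insert (q, p) (invSet σ)).ncard = (invSet σ).ncard + 1 :=
      Set.ncard_insert_of_notMem hnotin hfinσ
    have h3 : (insert (q, p) (invSet σ)).ncard ≤ (invSet (sgen j * σ)).ncard :=
      Set.ncard_le_ncard hsub hfin'.1
    have h4 : (invSet (sgen j * σ)).ncard ≤ w'.length := hfin'.2
    omega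
  have hp1 : 1 ≤ p := by
    rcases Nat.eq_zero_or_pos p with h | h
    · exfalso
      rw [h, sig_zero hfix] at hσp
      omega
    · exact h
  have hqn : q ≤ n := by
    by_contra hcon
    push_neg at hcon
    have hqq : σ q = q := hfix q (Or.inr hcon)
    have hj : j = q := by omega
    have hj1 : σ (j + 1) = j + 1 := hfix (j + 1) (Or.inr (by omega))
    have hpj : p = j + 1 := σ.injective (by rw [hσp, hj1])
    omega
  have hpk : p ≤ k := by
    by_contra hcon
    push_neg at hcon
    have := mono2 hmono hk1 q hqn p (by omega) hpq
    omega
  have hkq : k < q := by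
    by_contra hcon
    push_neg at hcon
    have := mono1 hfix hmono hkn q hcon p hpq
    omega
  exact ⟨p, q, hσp, hσq, hp1, hpk, hkq, hqn, hw'⟩
end Exists


section Tab

lemma crossing_cons (j : ℕ) (w' : List ℕ) (t : ℕ) :
    crossing (j :: w') (t + 1) =
      (sgen j ((crossing w' t).1), sgen j ((crossing w' t).2)) := by
  simp [crossing, wordPerm_cons, List.take_succ_cons, List.getD_cons_succ,
    Equiv.Perm.mul_apply]

lemma sameCross_map (e : Equiv.Perm ℕ) (a b c d : ℕ) :
    SameCross (e a, e b) (e c, e d) ↔ SameCross (a, b) (c, d) := by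
  unfold SameCross
  simp [Prod.ext_iff, e.injective.eq_iff]

lemma tabFun_cons (j : ℕ) (w' : List ℕ) (k : ℕ) (rc : ℕ × ℕ) :
    tabFun (j :: w') k rc = tabFun w' k rc +
      (if rc.1 < k ∧ SameCross (j, j + 1)
          (wordPerm (j :: w') (k - rc.1), wordPerm (j :: w') (k + 1 + rc.2))
        then w'.length + 1 else 0) := by
  unfold tabFun
  have hlen : (j :: w').length = w'.length + 1 := rfl
  rw [hlen, Finset.sum_range_succ']
  congr 1
  · apply Finset.sum_congr rfl
    intro t ht
    rw [crossing_cons]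
    have hx : ∀ x, wordPerm (j :: w') x = sgen j (wordPerm w' x) := by
      intro x
      rw [wordPerm_cons, Equiv.Perm.mul_apply]
    rw [hx, hx]
    have hsc := sameCross_map (sgen j) ((crossing w' t).1) ((crossing w' t).2)
      (wordPerm w' (k - rc.1)) (wordPerm w' (k + 1 + rc.2))
    rw [Prod.mk.eta] at hsc
    refine if_congr (and_congr_right fun _ => hsc) (by omega) rfl

lemma cond_iff {σ : Equiv.Perm ℕ} {k p q j : ℕ} (hσp : σ p = j + 1) (hσq : σ q = j)
    (hp1 : 1 ≤ p) (hpk : p ≤ k) (hkq : k < q) (hk1 : 1 ≤ k) (rc : ℕ × ℕ) :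
    (rc.1 < k ∧ SameCross (j, j + 1) (σ (k - rc.1), σ (k + 1 + rc.2))) ↔
      rc = (k - p, q - k - 1) := by
  constructor
  · rintro ⟨h1, h2⟩
    rcases h2 with h | h <;> rw [Prod.ext_iff] at h <;> dsimp at h
    · exfalso
      have : q = k - rc.1 := σ.injective (by rw [hσq, h.1])
      omega
    · have e1 : q = k + 1 + rc.2 := σ.injective (by rw [hσq, h.1])
      have e2 : p = k - rc.1 := σ.injective (by rw [hσp, h.2])
      rw [Prod.ext_iff]
      constructor <;> dsimp <;> omega
  · rintro rfl
    dsimp only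
    have e1 : k - (k - p) = p := by omega
    have e2 : k + 1 + (q - k - 1) = q := by omega
    rw [e1, e2, hσp, hσq]
    exact ⟨by omega, Or.inr rfl⟩

lemma tab_decomp {σ : Equiv.Perm ℕ} {k p q j : ℕ} (w' : List ℕ)
    (hσp : σ p = j + 1) (hσq : σ q = j) (hp1 : 1 ≤ p) (hpk : p ≤ k) (hkq : k < q)
    (hk1 : 1 ≤ k) (hw : wordPerm (j :: w') = σ) (rc : ℕ × ℕ) :
    tabFun (j :: w') k rc = tabFun w' k rc +
      (if rc = (k - p, q - k - 1) then w'.length + 1 else 0) := by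
  rw [tabFun_cons]
  congr 1
  rw [hw]
  exact if_congr (cond_iff hσp hσq hp1 hpk hkq hk1 rc) rfl rfl

end Tab

section SYT

lemma isSYTon_insert {C' : Finset (ℕ × ℕ)} {f' : ℕ × ℕ → ℕ} {x : ℕ × ℕ}
    (hS : IsSYTon C' f') (hx : x ∉ C')
    (hrow : ∀ d ∈ C', d.1 = x.1 → d.2 < x.2)
    (hcol : ∀ d ∈ C', d.2 = x.2 → d.1 < x.1) :
    IsSYTon (insert x C') (fun c => f' c + if c = x then C'.card + 1 else 0) := by
  obtain ⟨hvan, ⟨hmap, hinj, hsur⟩, hrows, hcols⟩ := hS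
  have hcard : (insert x C').card = C'.card + 1 := Finset.card_insert_of_notMem hx
  have hval : ∀ c ∈ C', 1 ≤ f' c ∧ f' c ≤ C'.card := by
    intro c hc
    have := hmap (Finset.mem_coe.mpr hc)
    simpa [Finset.mem_Icc] using this
  have hfx : f' x = 0 := hvan x hx
  refine ⟨?_, ⟨?_, ?_, ?_⟩, ?_, ?_⟩
  · intro c hc
    rw [Finset.mem_insert, not_or] at hc
    dsimp only
    rw [hvan c hc.2, if_neg hc.1]
  · intro c hc
    rw [Finset.mem_coe, Finset.mem_insert] at hc
    rw [Finset.mem_coe, Finset.mem_Icc, hcard]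
    dsimp only
    rcases hc with rfl | hc
    · rw [hfx, if_pos rfl]
      omega
    · have hcx : c ≠ x := fun h => hx (h ▸ hc)
      rw [if_neg hcx]
      have := hval c hc
      omega
  · intro a ha b hb hab
    rw [Finset.mem_coe, Finset.mem_insert] at ha hb
    dsimp only at hab
    rcases ha with rfl | ha <;> rcases hb with rfl | hb
    · rfl
    · exfalso
      have hbx : b ≠ a := fun h => hx (h ▸ hb)
      rw [hfx, if_pos rfl, if_neg hbx] at hab
      have := hval b hb
      omega
    · exfalso
      have hax : a ≠ b := fun h => hx (h ▸ ha)
      rw [hfx, if_pos rfl, if_neg hax] at hab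
      have := hval a ha
      omega
    · have hax : a ≠ x := fun h => hx (h ▸ ha)
      have hbx : b ≠ x := fun h => hx (h ▸ hb)
      rw [if_neg hax, if_neg hbx] at hab
      exact hinj (Finset.mem_coe.mpr ha) (Finset.mem_coe.mpr hb) (by omega)
  · intro v hv
    rw [Finset.mem_coe, Finset.mem_Icc, hcard] at hv
    by_cases hvm : v = C'.card + 1
    · refine ⟨x, ?_, ?_⟩
      · rw [Finset.mem_coe]
        exact Finset.mem_insert_self _ _
      · dsimp only
        rw [hfx, if_pos rfl, hvm]
        omega
    · have hv' : v ∈ (↑(Finset.Icc 1 C'.card) : Set ℕ) := by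
        rw [Finset.mem_coe, Finset.mem_Icc]
        omega
      obtain ⟨c, hc, hcv⟩ := hsur hv'
      rw [Finset.mem_coe] at hc
      have hcx : c ≠ x := fun h => hx (h ▸ hc)
      refine ⟨c, ?_, ?_⟩
      · rw [Finset.mem_coe]
        exact Finset.mem_insert_of_mem hc
      · dsimp only
        rw [if_neg hcx, hcv]
        omega
  · intro c hc d hd h1 h2
    rw [Finset.mem_insert] at hc hd
    dsimp only
    rcases hc with rfl | hc <;> rcases hd with rfl | hd
    · omega
    · exfalso
      have := hrow d hd h1.symm
      omega
    · have hcx : c ≠ d := fun h => hx (h ▸ hc)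
      rw [if_neg hcx, if_pos rfl, hfx]
      have := hval c hc
      omega
    · have hcx : c ≠ x := fun h => hx (h ▸ hc)
      have hdx : d ≠ x := fun h => hx (h ▸ hd)
      rw [if_neg hcx, if_neg hdx]
      have := hrows c hc d hd h1 h2
      omega
  · intro c hc d hd h1 h2
    rw [Finset.mem_insert] at hc hd
    dsimp only
    rcases hc with rfl | hc <;> rcases hd with rfl | hd
    · omega
    · exfalso
      have := hcol d hd h1.symm
      omega
    · have hcx : c ≠ d := fun h => hx (h ▸ hc)
      rw [if_neg hcx, if_pos rfl, hfx]
      have := hval c hc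
      omega
    · have hcx : c ≠ x := fun h => hx (h ▸ hc)
      have hdx : d ≠ x := fun h => hx (h ▸ hd)
      rw [if_neg hcx, if_neg hdx]
      have := hcols c hc d hd h1 h2
      omega

lemma isSYTon_erase {C : Finset (ℕ × ℕ)} {f : ℕ × ℕ → ℕ} {x : ℕ × ℕ}
    (hS : IsSYTon C f) (hx : x ∈ C) (hfx : f x = C.card) :
    IsSYTon (C.erase x) (fun c => if c = x then 0 else f c) := by
  obtain ⟨hvan, ⟨hmap, hinj, hsur⟩, hrows, hcols⟩ := hS
  have hcard : (C.erase x).card = C.card - 1 := Finset.card_erase_of_mem hx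
  have hpos : 1 ≤ C.card := Finset.card_pos.mpr ⟨x, hx⟩
  have hval : ∀ c ∈ C, 1 ≤ f c ∧ f c ≤ C.card := by
    intro c hc
    have := hmap (Finset.mem_coe.mpr hc)
    simpa [Finset.mem_Icc] using this
  have hvne : ∀ c ∈ C, c ≠ x → f c ≠ C.card := by
    intro c hc hcx h
    exact hcx (hinj (Finset.mem_coe.mpr hc) (Finset.mem_coe.mpr hx) (by rw [h, hfx]))
  refine ⟨?_, ⟨?_, ?_, ?_⟩, ?_, ?_⟩
  · intro c hc
    rw [Finset.mem_erase, not_and_or] at hc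
    dsimp only
    rcases hc with hc | hc
    · push_neg at hc
      rw [if_pos hc]
    · rw [hvan c hc]
      split <;> rfl
  · intro c hc
    rw [Finset.mem_coe, Finset.mem_erase] at hc
    rw [Finset.mem_coe, Finset.mem_Icc, hcard]
    dsimp only
    rw [if_neg hc.1]
    have h1 := hval c hc.2
    have h2 := hvne c hc.2 hc.1
    omega
  · intro a ha b hb hab
    rw [Finset.mem_coe, Finset.mem_erase] at ha hb
    dsimp only at hab
    rw [if_neg ha.1, if_neg hb.1] at hab
    exact hinj (Finset.mem_coe.mpr ha.2) (Finset.mem_coe.mpr hb.2) hab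
  · intro v hv
    rw [Finset.mem_coe, Finset.mem_Icc, hcard] at hv
    have hv' : v ∈ (↑(Finset.Icc 1 C.card) : Set ℕ) := by
      rw [Finset.mem_coe, Finset.mem_Icc]
      omega
    obtain ⟨c, hc, hcv⟩ := hsur hv'
    rw [Finset.mem_coe] at hc
    have hcx : c ≠ x := by
      intro h
      rw [h, hfx] at hcv
      omega
    refine ⟨c, ?_, ?_⟩
    · rw [Finset.mem_coe, Finset.mem_erase]
      exact ⟨hcx, hc⟩
    · dsimp only
      rw [if_neg hcx, hcv]
  · intro c hc d hd h1 h2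
    rw [Finset.mem_erase] at hc hd
    dsimp only
    rw [if_neg hc.1, if_neg hd.1]
    exact hrows c hc.2 d hd.2 h1 h2
  · intro c hc d hd h1 h2
    rw [Finset.mem_erase] at hc hd
    dsimp only
    rw [if_neg hc.1, if_neg hd.1]
    exact hcols c hc.2 d hd.2 h1 h2

end SYT


lemma main_bij (n k : ℕ) (hk1 : 1 ≤ k) (hkn : k < n) :
    ∀ m : ℕ, ∀ σ : Equiv.Perm ℕ, (invCells σ n k).card = m →
      (∀ i, i = 0 ∨ n < i → σ i = i) →
      (∀ i, 1 ≤ i → i ≠ k → i + 1 ≤ n → σ i < σ (i + 1)) →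
      Set.BijOn (fun w => tabFun w k) {w | IsReducedWordOf σ w}
        {f | IsSYTon (invCells σ n k) f} := by
  intro m
  induction m using Nat.strong_induction_on with
  | _ m ih =>
  intro σ hcard hfix hmono
  rcases Nat.eq_zero_or_pos m with rfl | hm
  · -- base case: σ = 1
    have hemp : invCells σ n k = ∅ := Finset.card_eq_zero.mp hcard
    have hone : σ = 1 := sig_eq_one hfix hmono hk1 hkn hemp
    have htab0 : tabFun [] k = fun _ => 0 := by
      funext rc
      simp [tabFun]
    have hset1 : {w : List ℕ | IsReducedWordOf σ w} = {[]} := by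
      ext w
      simp only [Set.mem_setOf_eq, Set.mem_singleton_iff]
      constructor
      · rintro ⟨h1, h2⟩
        have h3 := h2 [] (by rw [wordPerm_nil, h1, hone])
        have h4 : w.length = 0 := by simpa using h3
        exact List.length_eq_zero_iff.mp h4
      · rintro rfl
        exact ⟨by rw [wordPerm_nil, hone], fun v hv => by simp⟩
    have hset2 : {f : ℕ × ℕ → ℕ | IsSYTon (invCells σ n k) f} = {fun _ => 0} := by
      ext g
      simp only [Set.mem_setOf_eq, Set.mem_singleton_iff]
      constructor
      · intro hg
        funext c
        exact hg.1 c (by rw [hemp]; exact Finset.notMem_empty c)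
      · rintro rfl
        refine ⟨fun c _ => rfl, ?_, ?_, ?_⟩
        · rw [hemp]
          rw [show Finset.Icc 1 (∅ : Finset (ℕ × ℕ)).card = ∅ from by simp]
          simp only [Finset.coe_empty]
          exact ⟨fun a ha => absurd ha (Set.notMem_empty a),
            fun a ha => absurd ha (Set.notMem_empty a),
            Set.empty_subset _⟩
        · intro c hc
          rw [hemp] at hc
          exact absurd hc (Finset.notMem_empty c)
        · intro c hc
          rw [hemp] at hc
          exact absurd hc (Finset.notMem_empty c)
    rw [hset1, hset2]
    refine ⟨?_, ?_, ?_⟩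
    · intro w hw
      rw [Set.mem_singleton_iff] at hw
      subst hw
      exact htab0
    · intro a ha b hb _
      rw [Set.mem_singleton_iff] at ha hb
      rw [ha, hb]
    · intro g hg
      rw [Set.mem_singleton_iff] at hg
      subst hg
      exact ⟨[], rfl, htab0⟩
  · -- inductive case
    have key : ∀ j (w' : List ℕ), IsReducedWordOf σ (j :: w') →
        ∃ p q, 1 ≤ p ∧ p ≤ k ∧ k < q ∧ q ≤ n ∧ σ p = j + 1 ∧ σ q = j ∧
          IsReducedWordOf (sgen j * σ) w' ∧
          (∀ rc, tabFun (j :: w') k rc =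
            tabFun w' k rc + (if rc = (k - p, q - k - 1) then m else 0)) ∧
          Set.BijOn (fun w => tabFun w k) {w | IsReducedWordOf (sgen j * σ) w}
            {f | IsSYTon ((invCells σ n k).erase (k - p, q - k - 1)) f} := by
      intro j w' hred
      obtain ⟨p, q, hσp, hσq, hp1, hpk, hkq, hqn, hw'⟩ :=
        first_letter hk1 hkn hfix hmono hred
      have hcells' := invCells_step hσp hσq hp1 hpk hkq hqn
      have hcard' : (invCells (sgen j * σ) n k).card = m - 1 := by
        rw [hcells', Finset.card_erase_of_mem (corner_mem hσp hσq hp1 hpk hkq hqn hkn), hcard]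
      have hlen : (j :: w').length = m := by
        have h2 := ((reduced_iff hk1 hkn hfix hmono _).mp hred).2
        omega
      have hlen' : w'.length = m - 1 := by
        simp only [List.length_cons] at hlen
        omega
      have hred' : IsReducedWordOf (sgen j * σ) w' :=
        (reduced_iff hk1 hkn (step_fix hfix hσp hσq hp1 hpk hkq hqn hkn)
          (step_mono hfix hmono hσp hσq hp1 hpk hkq hqn) w').mpr
          ⟨hw', by rw [hlen', hcard']⟩
      have htabeq : ∀ rc, tabFun (j :: w') k rc =
          tabFun w' k rc + (if rc = (k - p, q - k - 1) then m else 0) := by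
        intro rc
        rw [tab_decomp w' hσp hσq hp1 hpk hkq hk1 hred.1 rc, hlen',
          show m - 1 + 1 = m from by omega]
      have hbij' := ih (m - 1) (by omega) (sgen j * σ) hcard'
        (step_fix hfix hσp hσq hp1 hpk hkq hqn hkn)
        (step_mono hfix hmono hσp hσq hp1 hpk hkq hqn)
      rw [hcells'] at hbij'
      exact ⟨p, q, hp1, hpk, hkq, hqn, hσp, hσq, hred', htabeq, hbij'⟩
    have hcorner : ∀ p q j, 1 ≤ p → p ≤ k → k < q → q ≤ n → σ p = j + 1 → σ q = j →
        (∀ d ∈ (invCells σ n k).erase (k - p, q - k - 1), d.1 = k - p → d.2 < q - k - 1) ∧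
        (∀ d ∈ (invCells σ n k).erase (k - p, q - k - 1), d.2 = q - k - 1 → d.1 < k - p) := by
      intro p q j hp1 hpk hkq hqn hσp hσq
      constructor
      · intro d hd h1
        rw [Finset.mem_erase] at hd
        obtain ⟨hdx, hdm⟩ := hd
        rw [mem_invCells] at hdm
        obtain ⟨a1, a2, a3, a4, a5⟩ := hdm
        by_contra hcon
        push_neg at hcon
        have hne : d.2 ≠ q - k - 1 := fun h => hdx (Prod.ext h1 h)
        have hgt : q < k + 1 + d.2 := by omega
        have hm2 := mono2 hmono hk1 (k + 1 + d.2) a4 q (by omega) hgt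
        have e : k - d.1 = p := by omega
        rw [e, hσp] at a5
        rw [hσq] at hm2
        omega
      · intro d hd h1
        rw [Finset.mem_erase] at hd
        obtain ⟨hdx, hdm⟩ := hd
        rw [mem_invCells] at hdm
        obtain ⟨a1, a2, a3, a4, a5⟩ := hdm
        by_contra hcon
        push_neg at hcon
        have hne : d.1 ≠ k - p := fun h => hdx (Prod.ext h h1)
        have hlt : k - d.1 < p := by omega
        have hm1 := mono1 hfix hmono hkn p hpk (k - d.1) hlt
        have e : k + 1 + d.2 = q := by omega
        rw [e, hσq] at a5
        rw [hσp] at hm1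
        omega
    have hmaps : Set.MapsTo (fun w => tabFun w k) {w | IsReducedWordOf σ w}
        {f | IsSYTon (invCells σ n k) f} := by
      intro w hw
      rw [Set.mem_setOf_eq] at hw
      rw [Set.mem_setOf_eq]
      cases w with
      | nil =>
        exfalso
        have h2 := ((reduced_iff hk1 hkn hfix hmono _).mp hw).2
        simp only [List.length_nil] at h2
        omega
      | cons j w' =>
        obtain ⟨p, q, hp1, hpk, hkq, hqn, hσp, hσq, hred', htabeq, hbij'⟩ := key j w' hw
        have hSYT' : IsSYTon ((invCells σ n k).erase (k - p, q - k - 1)) (tabFun w' k) :=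
          hbij'.mapsTo hred'
        have hxC : (k - p, q - k - 1) ∈ invCells σ n k :=
          corner_mem hσp hσq hp1 hpk hkq hqn hkn
        have hcorn := hcorner p q j hp1 hpk hkq hqn hσp hσq
        have hins := isSYTon_insert hSYT' (Finset.notMem_erase _ _) hcorn.1 hcorn.2
        rw [Finset.insert_erase hxC] at hins
        have hcardE : ((invCells σ n k).erase (k - p, q - k - 1)).card = m - 1 := by
          rw [Finset.card_erase_of_mem hxC, hcard]
        have hfun : (fun c => tabFun w' k c +
            if c = (k - p, q - k - 1) then
              ((invCells σ n k).erase (k - p, q - k - 1)).card + 1 else 0)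
            = tabFun (j :: w') k := by
          funext rc
          rw [htabeq rc, hcardE, show m - 1 + 1 = m from by omega]
        rwa [hfun] at hins
    have hinj : Set.InjOn (fun w => tabFun w k) {w | IsReducedWordOf σ w} := by
      intro w1 hw1 w2 hw2 heq
      rw [Set.mem_setOf_eq] at hw1 hw2
      dsimp only at heq
      cases w1 with
      | nil =>
        exfalso
        have h2 := ((reduced_iff hk1 hkn hfix hmono _).mp hw1).2
        simp only [List.length_nil] at h2
        omega
      | cons j1 w1' =>
      cases w2 with
      | nil =>
        exfalso
        have h2 := ((reduced_iff hk1 hkn hfix hmono _).mp hw2).2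
        simp only [List.length_nil] at h2
        omega
      | cons j2 w2' =>
        obtain ⟨p1, q1, hp11, hpk1, hkq1, hqn1, hσp1, hσq1, hred1', htabeq1, hbij1⟩ :=
          key j1 w1' hw1
        obtain ⟨p2, q2, hp12, hpk2, hkq2, hqn2, hσp2, hσq2, hred2', htabeq2, hbij2⟩ :=
          key j2 w2' hw2
        have hS1 : IsSYTon ((invCells σ n k).erase (k - p1, q1 - k - 1)) (tabFun w1' k) :=
          hbij1.mapsTo hred1'
        have hS2 : IsSYTon ((invCells σ n k).erase (k - p2, q2 - k - 1)) (tabFun w2' k) :=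
          hbij2.mapsTo hred2'
        have hv1 : tabFun (j1 :: w1') k (k - p1, q1 - k - 1) = m := by
          rw [htabeq1 _, if_pos rfl, hS1.1 _ (Finset.notMem_erase _ _)]
          omega
        have hv2 : tabFun (j2 :: w2') k (k - p2, q2 - k - 1) = m := by
          rw [htabeq2 _, if_pos rfl, hS2.1 _ (Finset.notMem_erase _ _)]
          omega
        have hx12 : ((k - p1, q1 - k - 1) : ℕ × ℕ) = (k - p2, q2 - k - 1) := by
          by_contra hne
          have h1 : tabFun (j2 :: w2') k (k - p1, q1 - k - 1) = m := by
            rw [← heq]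
            exact hv1
          rw [htabeq2 _, if_neg hne] at h1
          by_cases hin : ((k - p1, q1 - k - 1) : ℕ × ℕ) ∈
              (invCells σ n k).erase (k - p2, q2 - k - 1)
          · have hmv := hS2.2.1.1 (Finset.mem_coe.mpr hin)
            rw [Finset.mem_coe, Finset.mem_Icc] at hmv
            have hcardE2 : ((invCells σ n k).erase (k - p2, q2 - k - 1)).card = m - 1 := by
              rw [Finset.card_erase_of_mem
                (corner_mem hσp2 hσq2 hp12 hpk2 hkq2 hqn2 hkn), hcard]
            omega
          · rw [hS2.1 _ hin] at h1
            omega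
        have hq12 : q1 = q2 := by
          have h := hx12
          rw [Prod.ext_iff] at h
          dsimp only at h
          omega
        have hj12 : j1 = j2 := by rw [← hσq1, ← hσq2, hq12]
        subst hj12
        have htw : tabFun w1' k = tabFun w2' k := by
          funext rc
          have e1 := htabeq1 rc
          have e2 := htabeq2 rc
          rw [hx12] at e1
          have h := congrFun heq rc
          rw [e1, e2] at h
          exact Nat.add_right_cancel h
        have hww : w1' = w2' := hbij1.injOn hred1' hred2' htw
        rw [hww]
    have hsurj : Set.SurjOn (fun w => tabFun w k) {w | IsReducedWordOf σ w}
        {f | IsSYTon (invCells σ n k) f} := by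
      intro f hf
      rw [Set.mem_setOf_eq] at hf
      obtain ⟨hvan, ⟨hmapf, hinjf, hsurf⟩, hrowf, hcolf⟩ := hf
      have hmIcc : (m : ℕ) ∈ (↑(Finset.Icc 1 (invCells σ n k).card) : Set ℕ) := by
        rw [Finset.mem_coe, Finset.mem_Icc, hcard]
        omega
      obtain ⟨x, hxC, hfx⟩ := hsurf hmIcc
      rw [Finset.mem_coe] at hxC
      have hxm := (mem_invCells σ n k).mp hxC
      obtain ⟨hx1n, hx2n, hx1k, hxq, hxlt⟩ := hxm
      have hf' : IsSYTon (invCells σ n k) f := ⟨hvan, ⟨hmapf, hinjf, hsurf⟩, hrowf, hcolf⟩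
      have hR : k + 1 + x.2 = n ∨ σ (k - x.1) < σ (k + 1 + x.2 + 1) := by
        rcases eq_or_ne (k + 1 + x.2) n with h | h
        · exact Or.inl h
        · right
          have hnot : (x.1, x.2 + 1) ∉ invCells σ n k := by
            intro hmem
            have h5 := hrowf x hxC _ hmem rfl (Nat.lt_succ_self _)
            have h6 := hmapf (Finset.mem_coe.mpr hmem)
            rw [Finset.mem_coe, Finset.mem_Icc, hcard] at h6
            omega
          rw [mem_invCells] at hnot
          dsimp only at hnot
          push_neg at hnot
          have hle := hnot (by omega) (by omega) (by omega) (by omega)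
          have e : k + 1 + (x.2 + 1) = k + 1 + x.2 + 1 := by omega
          rw [e] at hle
          have hne3 : σ (k - x.1) ≠ σ (k + 1 + x.2 + 1) := fun hh => by
            have := σ.injective hh
            omega
          omega
      have hB : k - x.1 = 1 ∨ σ (k - x.1 - 1) < σ (k + 1 + x.2) := by
        rcases eq_or_ne (k - x.1) 1 with h | h
        · exact Or.inl h
        · right
          have hnot : (x.1 + 1, x.2) ∉ invCells σ n k := by
            intro hmem
            have h5 := hcolf x hxC _ hmem rfl (Nat.lt_succ_self _)
            have h6 := hmapf (Finset.mem_coe.mpr hmem)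
            rw [Finset.mem_coe, Finset.mem_Icc, hcard] at h6
            omega
          rw [mem_invCells] at hnot
          dsimp only at hnot
          push_neg at hnot
          have hle := hnot (by omega) (by omega) (by omega) (by omega)
          have e : k - (x.1 + 1) = k - x.1 - 1 := by omega
          rw [e] at hle
          have hne3 : σ (k - x.1 - 1) ≠ σ (k + 1 + x.2) := fun hh => by
            have := σ.injective hh
            omega
          omega
      have hsucc : σ (k - x.1) = σ (k + 1 + x.2) + 1 :=
        corner_succ hfix hmono hk1 hkn (by omega) (by omega) (by omega) hxq hxlt hR hB
      set j := σ (k + 1 + x.2) with hjdef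
      have hσp : σ (k - x.1) = j + 1 := hsucc
      have hσq : σ (k + 1 + x.2) = j := rfl
      have hp1 : 1 ≤ k - x.1 := by omega
      have hpk : k - x.1 ≤ k := by omega
      have hkq : k < k + 1 + x.2 := by omega
      have hcells' := invCells_step hσp hσq hp1 hpk hkq hxq
      have hex : ((k - (k - x.1), k + 1 + x.2 - k - 1) : ℕ × ℕ) = x := by
        rw [Prod.ext_iff]
        constructor <;> dsimp only <;> omega
      rw [hex] at hcells'
      have hcard' : (invCells (sgen j * σ) n k).card = m - 1 := by
        rw [hcells', Finset.card_erase_of_mem hxC, hcard]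
      have hbij' := ih (m - 1) (by omega) (sgen j * σ) hcard'
        (step_fix hfix hσp hσq hp1 hpk hkq hxq hkn)
        (step_mono hfix hmono hσp hσq hp1 hpk hkq hxq)
      have hSf' : IsSYTon (invCells (sgen j * σ) n k) (fun c => if c = x then 0 else f c) := by
        rw [hcells']
        exact isSYTon_erase hf' hxC (by rw [hfx, hcard])
      obtain ⟨w', hw'mem, hw'eq⟩ := hbij'.surjOn
        (show (fun c => if c = x then 0 else f c) ∈
          {g | IsSYTon (invCells (sgen j * σ) n k) g} from hSf')
      rw [Set.mem_setOf_eq] at hw'mem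
      have hσ'w : wordPerm w' = sgen j * σ := hw'mem.1
      have hlenw' : w'.length = m - 1 := by
        have h2 := ((reduced_iff hk1 hkn (step_fix hfix hσp hσq hp1 hpk hkq hxq hkn)
          (step_mono hfix hmono hσp hσq hp1 hpk hkq hxq) w').mp hw'mem).2
        omega
      have hwp : wordPerm (j :: w') = σ := by
        rw [wordPerm_cons, hσ'w, ← mul_assoc,
          show sgen j * sgen j = 1 from Equiv.swap_mul_self _ _, one_mul]
      have hwred : IsReducedWordOf σ (j :: w') := by
        rw [reduced_iff hk1 hkn hfix hmono]
        refine ⟨hwp, ?_⟩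
        simp only [List.length_cons]
        omega
      refine ⟨j :: w', hwred, ?_⟩
      have hw'eq' : tabFun w' k = fun c => if c = x then 0 else f c := hw'eq
      have htabeq : ∀ rc, tabFun (j :: w') k rc =
          tabFun w' k rc + (if rc = x then m else 0) := by
        intro rc
        rw [tab_decomp w' hσp hσq hp1 hpk hkq hk1 hwp rc, hex, hlenw',
          show m - 1 + 1 = m from by omega]
      funext rc
      dsimp only
      rw [htabeq rc, hw'eq']
      show (if rc = x then 0 else f rc) + (if rc = x then m else 0) = f rc
      by_cases hrc : rc = x
      · rw [if_pos hrc, if_pos hrc, hrc, hfx]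
        omega
      · rw [if_neg hrc, if_neg hrc]
        omega
    exact ⟨hmaps, hinj, hsurj⟩

/-- For a Grassmannian permutation `σ` with descent at position `k` and shape `λ`, the map
`w ↦ Tab(w)` is a bijection between the reduced words of `σ` and the standard Young
tableaux of shape `λ`. -/
theorem tab_bijection (n k : ℕ) (σ : Equiv.Perm ℕ)
    (hk : 1 ≤ k ∧ k < n)
    (hσ : ∀ i : ℕ, i = 0 ∨ n < i → σ i = i)
    (hdesc : ∀ i : ℕ, 1 ≤ i → (σ (i + 1) < σ i ↔ i = k)) :
    Set.BijOn (fun w => tabFun w k)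
      {w : List ℕ | IsReducedWordOf σ w}
      {f : ℕ × ℕ → ℕ | IsSYTon (invCells σ n k) f} := by
  apply main_bij n k hk.1 hk.2 (invCells σ n k).card σ rfl hσ
  intro i h1 h2 h3
  have h4 : ¬ σ (i + 1) < σ i := fun hcon => h2 ((hdesc i h1).mp hcon)
  have h5 : σ i ≠ σ (i + 1) := fun h => by have := σ.injective h; omega
  omega
end

section
/- Let T be a row-and-column strict tableau (entries strictly increasing along rows and down columns) whose column reading word τ(T) (columns read top to bottom, from the rightmost column to the leftmost) is a reduced word. Then Edelman-Greene insertion of τ(T) recovers T: P(τ(T)) = T, and each column of the recording tableau Q(τ(T)) consists of consecutive integers. -/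
/-- One row-insertion step of Edelman–Greene insertion: insert `x` into the row `R`,
returning the new row together with the entry (if any) bumped into the next row. -/
def rowIns (x : ℕ) (R : List ℕ) : List ℕ × Option ℕ :=
  if R.all (fun y => decide (y ≤ x)) then (R ++ [x], none)
  else
    let j := R.findIdx (fun y => decide (x < y))
    if R.getD j 0 = x + 1 ∧ 0 < j ∧ R.getD (j - 1) 0 = x then (R, some (x + 1))
    else (R.set j x, some (R.getD j 0))

/-- Edelman–Greene insertion of a letter `x` into a tableau, given as a list of rows. -/
def egInsert (x : ℕ) : List (List ℕ) → List (List ℕ)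
  | [] => [[x]]
  | R :: T =>
    match rowIns x R with
    | (R', none) => R' :: T
    | (R', some y) => R' :: egInsert y T

/-- The Edelman–Greene insertion tableau `P(w)`: the letters of `w` are inserted
from right to left. -/
def egP (w : List ℕ) : List (List ℕ) := w.foldr egInsert []

/-- The shape of a tableau: the list of its row lengths. -/
def shapeOf (T : List (List ℕ)) : List ℕ := T.map List.length

/-- The Edelman–Greene recording tableau `Q(w)`, as a function assigning to each cell
`(r, c)` (0-indexed) of the shape of `P(w)` the step at which that cell was created
(letters are inserted from right to left; steps are numbered `1, …, m`), and `0`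
to cells outside the shape. -/
def egQfun (w : List ℕ) : ℕ × ℕ → ℕ := fun rc =>
  if rc.2 < (shapeOf (egP w)).getD rc.1 0 then
    ((Finset.range w.length).filter
      (fun j => ¬ rc.2 < (shapeOf (egP (w.drop (w.length - j)))).getD rc.1 0)).card
  else 0

/-- The column reading word of a tableau: columns are read top to bottom, from the
rightmost column to the leftmost. -/
def colWord (T : List (List ℕ)) : List ℕ :=
  ((List.range ((T.map List.length).foldr max 0)).reverse).flatMap
    (fun j => T.filterMap (fun R => R[j]?))

/-- helper: findIdx of A ++ [v] -/
lemma findIdx_append_singleton (p : ℕ → Bool) (v : ℕ) (hv : p v = true) :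
    ∀ (A : List ℕ), (∀ a ∈ A, p a = false) → (A ++ [v]).findIdx p = A.length := by
  intro A
  induction A with
  | nil => intro _; simp [List.findIdx_cons, hv]
  | cons a A ih =>
    intro h
    have ha : p a = false := h a (by simp)
    simp only [List.cons_append, List.findIdx_cons, ha, cond_false, List.length_cons]
    rw [ih (fun b hb => h b (by simp [hb]))]

lemma getD_append_self (v : ℕ) : ∀ (A : List ℕ), (A ++ [v]).getD A.length 0 = v := by
  intro A; induction A with
  | nil => rfl
  | cons a A ih => simpa using ih

lemma set_append_self (v x : ℕ) : ∀ (A : List ℕ), (A ++ [v]).set A.length x = A ++ [x] := by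
  intro A; induction A with
  | nil => rfl
  | cons a A ih => simp [List.set, ih]

lemma rowIns_append (x : ℕ) (A : List ℕ) (h : ∀ y ∈ A, y ≤ x) :
    rowIns x A = (A ++ [x], none) := by
  have hall : A.all (fun y => decide (y ≤ x)) = true := by
    simp only [List.all_eq_true, decide_eq_true_eq]; exact h
  simp [rowIns, hall]

lemma rowIns_bump (x v : ℕ) (A : List ℕ) (hA : ∀ y ∈ A, y < x) (hv : x < v) :
    rowIns x (A ++ [v]) = (A ++ [x], some v) := by
  have hall : (A ++ [v]).all (fun y => decide (y ≤ x)) = false := by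
    apply List.all_eq_false.2
    exact ⟨v, by simp, by simpa using hv.not_ge⟩
  have hfind : (A ++ [v]).findIdx (fun y => decide (x < y)) = A.length := by
    apply findIdx_append_singleton _ _ (by simpa using hv)
    intro a ha; simpa using (hA a ha).not_gt
  have hgetD : (A ++ [v]).getD A.length 0 = v := getD_append_self v A
  rw [rowIns, hall]
  simp only [Bool.false_eq_true, if_false, hfind, hgetD, set_append_self]
  rw [if_neg]
  rintro ⟨h1, h2, h3⟩
  rw [List.getD_append _ _ _ _ (by omega)] at h3
  have hmem : A.getD (A.length - 1) 0 ∈ A := by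
    rw [List.getD_eq_getElem _ _ (by omega)]; exact List.getElem_mem _
  have := hA _ hmem; omega

/-- intermediate state of column insertion -/
def mkState : List (List ℕ) → ℕ → List ℕ → List (List ℕ)
  | [], _, _ => []
  | R :: Rs, c, [] => if c = 0 then [] else R.take c :: mkState Rs c []
  | R :: Rs, c, v :: vs => (R.take c ++ [v]) :: mkState Rs c vs

lemma mkState_zero_nil (Rs : List (List ℕ)) : mkState Rs 0 [] = [] := by
  cases Rs <;> simp [mkState]

lemma mkState_cons_pos (R : List ℕ) (Rs : List (List ℕ)) {c : ℕ} (hc : c ≠ 0) :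
    mkState (R :: Rs) c [] = R.take c :: mkState Rs c [] := by
  simp [mkState, hc]

lemma egInsert_mkState (c : ℕ) : ∀ (Rs : List (List ℕ)) (x : ℕ) (vs : List ℕ),
    (∀ i, i + 1 < (x :: vs).length → (x :: vs).getD i 0 < (x :: vs).getD (i + 1) 0) →
    vs.length < Rs.length →
    (∀ i, i ≤ vs.length → ∀ y ∈ (Rs.getD i []).take c, y < (x :: vs).getD i 0) →
    egInsert x (mkState Rs c vs) = mkState Rs c (x :: vs) := by
  intro Rs
  induction Rs with
  | nil => intro x vs _ hlen _; simp at hlen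
  | cons R Rs ih =>
    intro x vs hchain hlen hdom
    cases vs with
    | nil =>
      have hx : ∀ y ∈ R.take c, y < x := by
        intro y hy; simpa using hdom 0 (by simp) y (by simpa using hy)
      rcases Nat.eq_zero_or_pos c with hc | hc
      · subst hc
        rw [mkState_zero_nil]
        show egInsert x [] = mkState (R :: Rs) 0 [x]
        simp [egInsert, mkState, mkState_zero_nil]
      · rw [mkState_cons_pos R Rs hc.ne']
        have hri := rowIns_append x (R.take c) (fun y hy => (hx y hy).le)
        show (match rowIns x (R.take c) with
          | (R', none) => R' :: mkState Rs c []
          | (R', some y) => R' :: egInsert y (mkState Rs c [])) = _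
        rw [hri]
        show (R.take c ++ [x]) :: mkState Rs c [] = mkState (R :: Rs) c [x]
        rfl
    | cons v vs =>
      have hx : ∀ y ∈ R.take c, y < x := by
        intro y hy; simpa using hdom 0 (by simp) y (by simpa using hy)
      have hxv : x < v := by simpa using hchain 0 (by simp)
      have hri := rowIns_bump x v (R.take c) hx hxv
      show egInsert x ((R.take c ++ [v]) :: mkState Rs c vs) = _
      show (match rowIns x (R.take c ++ [v]) with
        | (R', none) => R' :: mkState Rs c vs
        | (R', some y) => R' :: egInsert y (mkState Rs c vs)) = _
      rw [hri]
      show (R.take c ++ [x]) :: egInsert v (mkState Rs c vs) = _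
      have h1 : ∀ i, i + 1 < (v :: vs).length → (v :: vs).getD i 0 < (v :: vs).getD (i + 1) 0 := by
        intro i hi
        have := hchain (i + 1) (by simpa using hi)
        simpa using this
      have h2 : vs.length < Rs.length := by
        have := hlen; simp only [List.length_cons] at this; omega
      have h3 : ∀ i ≤ vs.length, ∀ y ∈ List.take c (Rs.getD i []), y < (v :: vs).getD i 0 := by
        intro i hi y hy
        have := hdom (i + 1) (by simpa using Nat.succ_le_succ hi) y (by simpa using hy)
        simpa using this
      rw [ih v vs h1 h2 h3]
      rfl

lemma shape_mkState : ∀ (Rs : List (List ℕ)) (c : ℕ) (vs : List ℕ), vs.length ≤ Rs.length →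
    ∀ i, (shapeOf (mkState Rs c vs)).getD i 0
      = min (Rs.getD i []).length c + (if i < vs.length then 1 else 0) := by
  intro Rs
  induction Rs with
  | nil =>
    intro c vs hlen i
    have : vs = [] := List.length_eq_zero_iff.mp (Nat.le_zero.mp hlen)
    subst this
    simp [mkState, shapeOf]
  | cons R Rs ih =>
    intro c vs hlen i
    cases vs with
    | nil =>
      rcases Nat.eq_zero_or_pos c with hc | hc
      · subst hc; rw [mkState_zero_nil]; simp [shapeOf]
      · rw [mkState_cons_pos R Rs hc.ne']
        cases i with
        | zero => simp [shapeOf, Nat.min_comm]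
        | succ i =>
          have := ih c [] (by simp) i
          simp only [shapeOf, List.map_cons, List.getD_cons_succ, List.getD_cons_succ] at this ⊢
          simpa using this
    | cons v vs =>
      cases i with
      | zero => simp [mkState, shapeOf, Nat.min_comm]
      | succ i =>
        have hl : vs.length ≤ Rs.length := by
          simp only [List.length_cons] at hlen; omega
        have := ih c vs hl i
        simpa [mkState, shapeOf] using this

lemma rowIns_fst_length (x : ℕ) (R : List ℕ) : R.length ≤ (rowIns x R).1.length := by
  rw [rowIns]
  split
  · simp
  · simp only []
    split
    · simp
    · simp

lemma shape_getD_le_egInsert (x : ℕ) : ∀ (S : List (List ℕ)), ∀ (i : ℕ),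
    (shapeOf S).getD i 0 ≤ (shapeOf (egInsert x S)).getD i 0 := by
  intro S
  induction S generalizing x with
  | nil => intro i; simp [shapeOf]
  | cons R rest ih =>
    intro i
    have hlen := rowIns_fst_length x R
    show (shapeOf (R :: rest)).getD i 0 ≤ (shapeOf (match rowIns x R with
      | (R', none) => R' :: rest
      | (R', some y) => R' :: egInsert y rest)).getD i 0
    rcases h : rowIns x R with ⟨R', o⟩
    rw [h] at hlen
    cases o with
    | none =>
      cases i with
      | zero => simpa [shapeOf] using hlen
      | succ i => simp [shapeOf]
    | some y =>
      cases i with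
      | zero => simpa [shapeOf] using hlen
      | succ i => simpa [shapeOf] using ih y i

lemma rel_getD_of_adj {α : Type*} (d : α) (R : α → α → Prop) (hrefl : ∀ a, R a a)
    (htrans : ∀ {a b c}, R a b → R b c → R a c) (l : List α)
    (h : ∀ i, i + 1 < l.length → R (l.getD i d) (l.getD (i + 1) d)) :
    ∀ a b, a ≤ b → b < l.length → R (l.getD a d) (l.getD b d) := by
  intro a b hab hb
  induction b with
  | zero =>
    have : a = 0 := Nat.le_zero.mp hab
    subst this; exact hrefl _
  | succ n ihn =>
    rcases Nat.lt_or_ge a (n + 1) with h1 | h1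
    · exact htrans (ihn (by omega) (by omega)) (h n hb)
    · have : a = n + 1 := le_antisymm hab h1
      subst this; exact hrefl _

lemma lt_getD_of_mem_take (l : List ℕ) (hs : List.Pairwise (· < ·) l) (c : ℕ)
    (hc : c < l.length) : ∀ y ∈ l.take c, y < l.getD c 0 := by
  intro y hy
  obtain ⟨j, hj, rfl⟩ := List.mem_iff_getElem.1 hy
  have hjc : j < c := by
    have := hj; rw [List.length_take] at this; omega
  rw [List.getElem_take, List.getD_eq_getElem _ _ hc]
  have := List.pairwise_iff_get.1 hs ⟨j, by omega⟩ ⟨c, hc⟩ (by simpa using hjc)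
  simpa using this

lemma colw_spec (c : ℕ) : ∀ (T : List (List ℕ)),
    (∀ a b, a ≤ b → b < T.length → (T.getD b []).length ≤ (T.getD a []).length) →
    (∀ j, (j < (T.filterMap (fun R => R[c]?)).length ↔ c < (T.getD j []).length)) ∧
    (∀ j, j < (T.filterMap (fun R => R[c]?)).length →
      (T.filterMap (fun R => R[c]?)).getD j 0 = (T.getD j []).getD c 0) := by
  intro T
  induction T with
  | nil => intro _; simp
  | cons R T ih =>
    intro hlen
    have hlen' : ∀ a b, a ≤ b → b < T.length → (T.getD b []).length ≤ (T.getD a []).length := by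
      intro a b hab hb
      have := hlen (a + 1) (b + 1) (by omega) (by simpa using Nat.succ_lt_succ hb)
      simpa using this
    have ihT := ih hlen'
    by_cases hc : c < R.length
    · have hfm : (R :: T).filterMap (fun R => R[c]?) = R[c] :: T.filterMap (fun R => R[c]?) :=
        List.filterMap_cons_some (List.getElem?_eq_getElem hc)
      constructor
      · intro j
        cases j with
        | zero => simpa [hfm] using hc
        | succ j =>
          rw [hfm]
          simp only [List.length_cons, List.getD_cons_succ, Nat.succ_lt_succ_iff]
          exact ihT.1 j
      · intro j hj
        cases j with
        | zero =>
          rw [hfm]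
          simp only [List.getD_cons_zero]
          rw [List.getD_eq_getElem _ _ hc]
        | succ j =>
          rw [hfm] at hj ⊢
          simp only [List.length_cons, Nat.succ_lt_succ_iff] at hj
          simp only [List.getD_cons_succ]
          exact ihT.2 j hj
    · have hall : ∀ L ∈ R :: T, (fun R => R[c]?) L = none := by
        intro L hL
        rcases List.mem_cons.1 hL with rfl | hL
        · exact List.getElem?_eq_none (by omega)
        · obtain ⟨k, hk, rfl⟩ := List.mem_iff_getElem.1 hL
          apply List.getElem?_eq_none
          have h1 : (T.getD k []).length ≤ R.length := by
            have := hlen 0 (k + 1) (by omega) (by simpa using Nat.succ_lt_succ hk)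
            simpa using this
          rw [List.getD_eq_getElem _ _ hk] at h1
          omega
      have hfm : (R :: T).filterMap (fun R => R[c]?) = [] := by
        rw [List.filterMap_eq_nil_iff]; exact hall
      rw [hfm]
      constructor
      · intro j
        simp only [List.length_nil, Nat.not_lt_zero, false_iff, not_lt]
        rcases Nat.lt_or_ge j ((R :: T).length) with hj | hj
        · have hnone := hall _ (List.getElem_mem hj)
          simp only at hnone
          rw [List.getD_eq_getElem _ _ hj]
          exact le_of_not_gt (fun hcc => by
            rw [List.getElem?_eq_getElem hcc] at hnone
            simp at hnone)
        · rw [List.getD_eq_default _ _ hj]; simp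
      · intro j hj; simp at hj

lemma getD_drop' (l : List ℕ) (n k : ℕ) : (l.drop n).getD k 0 = l.getD (n + k) 0 := by
  simp [List.getD_eq_getElem?_getD, List.getElem?_drop]

lemma mkState_succ (c : ℕ) : ∀ (Rs : List (List ℕ)),
    (∀ R ∈ Rs, R ≠ []) →
    (∀ a b, a ≤ b → b < Rs.length → (Rs.getD b []).length ≤ (Rs.getD a []).length) →
    mkState Rs c (Rs.filterMap (fun R => R[c]?)) = mkState Rs (c + 1) [] := by
  intro Rs
  induction Rs with
  | nil => intro _ _; simp [mkState]
  | cons R Rs ih =>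
    intro hne hlen
    have hne' : ∀ R' ∈ Rs, R' ≠ [] := fun R' h => hne R' (by simp [h])
    have hlen' : ∀ a b, a ≤ b → b < Rs.length → (Rs.getD b []).length ≤ (Rs.getD a []).length := by
      intro a b hab hb
      have := hlen (a + 1) (b + 1) (by omega) (by simpa using Nat.succ_lt_succ hb)
      simpa using this
    by_cases hc : c < R.length
    · have hfm : (R :: Rs).filterMap (fun R => R[c]?) = R[c] :: Rs.filterMap (fun R => R[c]?) :=
        List.filterMap_cons_some (List.getElem?_eq_getElem hc)
    
      rw [hfm]
      show (R.take c ++ [R[c]]) :: mkState Rs c (Rs.filterMap (fun R => R[c]?))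
        = mkState (R :: Rs) (c + 1) []
      rw [mkState_cons_pos R Rs (Nat.succ_ne_zero c), ih hne' hlen']
      congr 1
      rw [List.take_succ, List.getElem?_eq_getElem hc]
      rfl
    · have hfm : (R :: Rs).filterMap (fun R => R[c]?) = [] := by
        rw [List.filterMap_eq_nil_iff]
        intro L hL
        rcases List.mem_cons.1 hL with rfl | hL
        · exact List.getElem?_eq_none (by omega)
        · obtain ⟨k, hk, rfl⟩ := List.mem_iff_getElem.1 hL
          apply List.getElem?_eq_none
          have h1 : (Rs.getD k []).length ≤ R.length := by
            have := hlen 0 (k + 1) (by omega) (by simpa using Nat.succ_lt_succ hk)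
            simpa using this
          rw [List.getD_eq_getElem _ _ hk] at h1
          omega
      have hc0 : c ≠ 0 := by
        intro h; subst h
        exact hne R (by simp) (List.length_eq_zero_iff.mp (by omega))
      rw [hfm, mkState_cons_pos R Rs hc0, mkState_cons_pos R Rs (Nat.succ_ne_zero c)]
      have htk : R.take c = R.take (c + 1) := by
        rw [List.take_of_length_le (by omega), List.take_of_length_le (by omega)]
      rw [htk]
      congr 1
      have hfm' : Rs.filterMap (fun R => R[c]?) = [] := by
        rw [List.filterMap_eq_nil_iff]
        intro L hL
        obtain ⟨k, hk, rfl⟩ := List.mem_iff_getElem.1 hL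
        apply List.getElem?_eq_none
        have h1 : (Rs.getD k []).length ≤ R.length := by
          have := hlen 0 (k + 1) (by omega) (by simpa using Nat.succ_lt_succ hk)
          simpa using this
        rw [List.getD_eq_getElem _ _ hk] at h1
        omega
      rw [show mkState Rs c [] = mkState Rs c (Rs.filterMap (fun R => R[c]?)) from by rw [hfm']]
      exact ih hne' hlen'

lemma foldr_col (T : List (List ℕ)) (c : ℕ) (col : List ℕ)
    (hlenT : col.length ≤ T.length)
    (hadj : ∀ i, i + 1 < col.length → col.getD i 0 < col.getD (i + 1) 0)
    (hdom : ∀ a b, a ≤ b → b < col.length → ∀ y ∈ (T.getD a []).take c, y < col.getD b 0) :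
    ∀ d, d ≤ col.length →
      (col.drop (col.length - d)).foldr egInsert (mkState T c [])
        = mkState T c (col.drop (col.length - d)) := by
  intro d
  induction d with
  | zero => simp
  | succ d ihd =>
    intro hd
    have hi : col.length - (d + 1) < col.length := by omega
    have hdropeq : col.drop (col.length - (d + 1))
        = col.getD (col.length - (d + 1)) 0 :: col.drop (col.length - d) := by
      rw [List.getD_eq_getElem _ _ hi]
      have := List.drop_eq_getElem_cons hi
      rwa [show col.length - (d + 1) + 1 = col.length - d by omega] at this
    set i := col.length - (d + 1) with hidef
    set x := col.getD i 0
    set vs := col.drop (col.length - d) with hvsdef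
    have hvslen : vs.length = d := by
      rw [hvsdef, List.length_drop]; omega
    rw [hdropeq, List.foldr_cons, ihd (by omega)]
    have heq := egInsert_mkState c T x vs ?_ ?_ ?_
    · rw [heq, ← hdropeq]
    · -- chain
      intro k hk
      have hxvs : x :: vs = col.drop i := hdropeq.symm
      rw [hxvs, getD_drop', getD_drop']
      rw [hxvs, List.length_drop] at hk
      exact hadj (i + k) (by omega)
    · -- length
      rw [hvslen]; omega
    · -- dominance
      intro k hk y hy
      have hxvs : x :: vs = col.drop i := hdropeq.symm
      rw [hxvs, getD_drop']
      exact hdom k (i + k) (by omega) (by rw [hvslen] at hk; omega) y hy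

def Wword (T : List (List ℕ)) (c : ℕ) : List ℕ :=
  ((List.range c).reverse).flatMap (fun j => T.filterMap (fun R => R[j]?))

lemma Wword_succ (T : List (List ℕ)) (c : ℕ) :
    Wword T (c + 1) = T.filterMap (fun R => R[c]?) ++ Wword T c := by
  simp [Wword, List.range_succ]

lemma colWord_eq_Wword (T : List (List ℕ)) :
    colWord T = Wword T ((T.map List.length).foldr max 0) := rfl

lemma le_foldr_max (a : ℕ) : ∀ (L : List ℕ), a ∈ L → a ≤ L.foldr max 0 := by
  intro L
  induction L with
  | nil => simp
  | cons b L ih =>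
    intro h
    rcases List.mem_cons.1 h with rfl | h
    · exact le_max_left _ _
    · exact le_trans (ih h) (le_max_right _ _)

section Main

variable (T : List (List ℕ))
variable (hrows : ∀ R ∈ T, R ≠ [] ∧ List.Pairwise (· < ·) R)
variable (hlenmono : ∀ a b, a ≤ b → b < T.length → (T.getD b []).length ≤ (T.getD a []).length)
variable (hcol : ∀ r c : ℕ, r + 1 < T.length → c < (T.getD (r + 1) []).length →
      (T.getD r []).getD c 0 < (T.getD (r + 1) []).getD c 0)

include hlenmono hcol in
/-- adjacent strict increase along a column -/
lemma col_adj (c : ℕ) :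
    ∀ i, i + 1 < (T.filterMap (fun R => R[c]?)).length →
      (T.filterMap (fun R => R[c]?)).getD i 0 < (T.filterMap (fun R => R[c]?)).getD (i + 1) 0 := by
  intro i hi
  have spec := colw_spec c T hlenmono
  have hlc : (T.filterMap (fun R => R[c]?)).length ≤ T.length := List.length_filterMap_le _ _
  have h1 : i + 1 < T.length := lt_of_lt_of_le hi hlc
  have h2 : c < (T.getD (i + 1) []).length := (spec.1 (i + 1)).1 hi
  rw [spec.2 i (by omega), spec.2 (i + 1) hi]
  exact hcol i c h1 h2

include hrows hlenmono hcol in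
lemma egP_Wword : ∀ c : ℕ, egP (Wword T c) = mkState T c [] := by
  intro c
  induction c with
  | zero =>
    rw [show Wword T 0 = [] from by simp [Wword], mkState_zero_nil]
    rfl
  | succ c ihc =>
    rw [Wword_succ]
    show List.foldr egInsert [] (T.filterMap (fun R => R[c]?) ++ Wword T c) = _
    rw [List.foldr_append]
    have spec := colw_spec c T hlenmono
    set col := T.filterMap (fun R => R[c]?) with hcoldef
    have hlc : col.length ≤ T.length := List.length_filterMap_le _ _
    have hfold := foldr_col T c col hlc (col_adj T hlenmono hcol c) ?_ col.length (le_refl _)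
    · rw [Nat.sub_self, List.drop_zero] at hfold
      show List.foldr egInsert (egP (Wword T c)) col = _
      rw [ihc, hfold, hcoldef]
      exact mkState_succ c T (fun R hR => (hrows R hR).1) hlenmono
    · -- dominance
      intro a b hab hb y hy
      have hca : c < (T.getD a []).length := (spec.1 a).1 (by omega)
      have haT : a < T.length := by
        have : b < T.length := lt_of_lt_of_le hb hlc; omega
      have hsort : List.Pairwise (· < ·) (T.getD a []) := by
        have hmem : T.getD a [] ∈ T := by
          rw [List.getD_eq_getElem _ _ haT]; exact List.getElem_mem _
        exact (hrows _ hmem).2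
      have h1 : y < (T.getD a []).getD c 0 := lt_getD_of_mem_take _ hsort c hca y hy
      have h2 : (T.getD a []).getD c 0 = col.getD a 0 := (spec.2 a (by omega)).symm
      have h3 : col.getD a 0 ≤ col.getD b 0 := by
        refine rel_getD_of_adj 0 (· ≤ ·) (fun _ => le_refl _) (fun h1 h2 => le_trans h1 h2)
          col (fun i hi => (col_adj T hlenmono hcol c i hi).le) a b hab hb
      omega

lemma mkState_top : ∀ (Rs : List (List ℕ)) (m : ℕ),
    (∀ R ∈ Rs, R ≠ [] ∧ R.length ≤ m) → mkState Rs m [] = Rs := by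
  intro Rs
  induction Rs with
  | nil => intro m _; rfl
  | cons R Rs ih =>
    intro m h
    have h0 := h R (by simp)
    have hm : m ≠ 0 := by
      intro hm; subst hm
      exact h0.1 (List.length_eq_zero_iff.mp (by omega))
    rw [mkState_cons_pos R Rs hm, List.take_of_length_le h0.2,
      ih m (fun R' hR' => h R' (by simp [hR']))]

include hrows hlenmono hcol in
lemma egP_colWord : egP (colWord T) = T := by
  rw [colWord_eq_Wword, egP_Wword T hrows hlenmono hcol]
  apply mkState_top
  intro R hR
  exact ⟨(hrows R hR).1, le_foldr_max _ _ (List.mem_map_of_mem hR)⟩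

end Main

lemma Wword_decomp (T : List (List ℕ)) : ∀ a b : ℕ, a ≤ b →
    ∃ U, Wword T b = U ++ Wword T a := by
  intro a b hab
  induction b with
  | zero =>
    have : a = 0 := Nat.le_zero.mp hab
    subst this; exact ⟨[], rfl⟩
  | succ n ihn =>
    rcases Nat.lt_or_ge a (n + 1) with h | h
    · obtain ⟨U, hU⟩ := ihn (by omega)
      exact ⟨T.filterMap (fun R => R[n]?) ++ U, by rw [Wword_succ, hU, List.append_assoc]⟩
    · have : a = n + 1 := le_antisymm hab h
      subst this; exact ⟨[], rfl⟩

section Main2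

variable (T : List (List ℕ))
variable (hrows : ∀ R ∈ T, R ≠ [] ∧ List.Pairwise (· < ·) R)
variable (hlenmono : ∀ a b, a ≤ b → b < T.length → (T.getD b []).length ≤ (T.getD a []).length)
variable (hcol : ∀ r c : ℕ, r + 1 < T.length → c < (T.getD (r + 1) []).length →
      (T.getD r []).getD c 0 < (T.getD (r + 1) []).getD c 0)

include hrows hlenmono hcol in
lemma col_dom (c : ℕ) : ∀ a b, a ≤ b → b < (T.filterMap (fun R => R[c]?)).length →
    ∀ y ∈ (T.getD a []).take c, y < (T.filterMap (fun R => R[c]?)).getD b 0 := by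
  intro a b hab hb y hy
  have spec := colw_spec c T hlenmono
  set col := T.filterMap (fun R => R[c]?) with hcoldef
  have hlc : col.length ≤ T.length := List.length_filterMap_le _ _
  have hca : c < (T.getD a []).length := (spec.1 a).1 (by omega)
  have haT : a < T.length := by
    have : b < T.length := lt_of_lt_of_le hb hlc; omega
  have hsort : List.Pairwise (· < ·) (T.getD a []) := by
    have hmem : T.getD a [] ∈ T := by
      rw [List.getD_eq_getElem _ _ haT]; exact List.getElem_mem _
    exact (hrows _ hmem).2
  have h1 : y < (T.getD a []).getD c 0 := lt_getD_of_mem_take _ hsort c hca y hy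
  have h2 : (T.getD a []).getD c 0 = col.getD a 0 := (spec.2 a (by omega)).symm
  have h3 : col.getD a 0 ≤ col.getD b 0 :=
    rel_getD_of_adj 0 (· ≤ ·) (fun _ => le_refl _) (fun h1 h2 => le_trans h1 h2)
      col (fun i hi => (col_adj T hlenmono hcol c i hi).le) a b hab hb
  omega

include hrows hlenmono hcol in
lemma egQ_val (c i : ℕ) (hi : i < (T.filterMap (fun R => R[c]?)).length) :
    egQfun (colWord T) (i, c) = (Wword T c).length + i + 1 := by
  have spec := colw_spec c T hlenmono
  set col := T.filterMap (fun R => R[c]?) with hcoldef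
  have hlc : col.length ≤ T.length := List.length_filterMap_le _ _
  have hcT : c < (T.getD i []).length := (spec.1 i).1 hi
  set m := (T.map List.length).foldr max 0 with hm
  have hiT : i < T.length := lt_of_lt_of_le hi hlc
  have hcm : c < m := by
    have h1 : (T.getD i []).length ≤ m := by
      apply le_foldr_max
      rw [List.getD_eq_getElem _ _ hiT]
      exact List.mem_map_of_mem (List.getElem_mem _)
    omega
  obtain ⟨U, hU⟩ : ∃ U, colWord T = U ++ (col ++ Wword T c) := by
    obtain ⟨U, hU⟩ := Wword_decomp T (c + 1) m (by omega)
    exact ⟨U, by rw [colWord_eq_Wword, ← hm, hU, Wword_succ, hcoldef]⟩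
  set S := (Wword T c).length with hS
  have hlen_eq : (colWord T).length = U.length + col.length + S := by
    rw [hU]; simp [List.length_append]; omega
  have hstate : ∀ r', r' ≤ col.length →
      egP ((colWord T).drop ((colWord T).length - (S + r')))
        = mkState T c (col.drop (col.length - r')) := by
    intro r' hr'
    have hsplit : colWord T
        = (U ++ col.take (col.length - r')) ++ (col.drop (col.length - r') ++ Wword T c) := by
      rw [hU, List.append_assoc]
      congr 1
      rw [← List.append_assoc, List.take_append_drop]
    have hdlen : (colWord T).length - (S + r') = (U ++ col.take (col.length - r')).length := by
      simp only [List.length_append, List.length_take]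
      omega
    rw [hdlen, hsplit, List.drop_left]
    show List.foldr egInsert [] (col.drop (col.length - r') ++ Wword T c) = _
    rw [List.foldr_append]
    show List.foldr egInsert (egP (Wword T c)) (col.drop (col.length - r')) = _
    rw [egP_Wword T hrows hlenmono hcol c]
    exact foldr_col T c col hlc (col_adj T hlenmono hcol c)
      (col_dom T hrows hlenmono hcol c) r' hr'
  have hpres : ∀ r', r' ≤ col.length →
      ((c < (shapeOf (egP ((colWord T).drop ((colWord T).length - (S + r'))))).getD i 0)
        ↔ i < r') := by
    intro r' hr'
    rw [hstate r' hr']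
    have hvs : (col.drop (col.length - r')).length = r' := by rw [List.length_drop]; omega
    rw [shape_mkState T c _ (by rw [hvs]; omega) i, hvs]
    have hmin : min (T.getD i []).length c = c := Nat.min_eq_right hcT.le
    rw [hmin]
    split_ifs with h
    · simp [h]
    · simp [h]
  have hmono : ∀ j j', j ≤ j' → j' ≤ (colWord T).length →
      c < (shapeOf (egP ((colWord T).drop ((colWord T).length - j)))).getD i 0 →
      c < (shapeOf (egP ((colWord T).drop ((colWord T).length - j')))).getD i 0 := by
    intro j j' hjj' hj'
    induction j' with
    | zero =>
      have : j = 0 := by omega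
      subst this; exact id
    | succ n ihn =>
      rcases Nat.lt_or_ge j (n + 1) with h | h
      · intro hP
        have hPn := ihn (by omega) (by omega) hP
        have hlt : (colWord T).length - (n + 1) < (colWord T).length := by omega
        have hcons : (colWord T).drop ((colWord T).length - (n + 1))
            = (colWord T)[(colWord T).length - (n + 1)]
              :: (colWord T).drop ((colWord T).length - n) := by
          have := List.drop_eq_getElem_cons hlt
          rwa [show (colWord T).length - (n + 1) + 1 = (colWord T).length - n by omega] at this
        rw [hcons]
        show c < (shapeOf (egInsert _ (egP ((colWord T).drop ((colWord T).length - n))))).getD i 0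
        exact lt_of_lt_of_le hPn (shape_getD_le_egInsert _ _ i)
      · have : j = n + 1 := by omega
        subst this; exact id
  have hble : S + i + 1 ≤ (colWord T).length := by omega
  have hnotP : ¬ c < (shapeOf (egP ((colWord T).drop ((colWord T).length - (S + i))))).getD i 0 := by
    rw [hpres i (by omega)]; omega
  have hP : c < (shapeOf (egP ((colWord T).drop ((colWord T).length - (S + i + 1))))).getD i 0 := by
    have := (hpres (i + 1) (by omega)).2 (by omega)
    rwa [show S + (i + 1) = S + i + 1 by ring] at this
  have hPfull : egP (colWord T) = T := egP_colWord T hrows hlenmono hcol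
  have hshT : (shapeOf T).getD i 0 = (T.getD i []).length := by
    rw [shapeOf, List.getD_eq_getElem _ _ (show i < (T.map List.length).length by simpa using hiT),
      List.getD_eq_getElem _ _ hiT]
    simp
  show (if c < (shapeOf (egP (colWord T))).getD i 0 then
      ((Finset.range (colWord T).length).filter
        (fun j => ¬ c < (shapeOf (egP ((colWord T).drop ((colWord T).length - j)))).getD i 0)).card
    else 0) = S + i + 1
  rw [hPfull, if_pos (by rw [hshT]; omega)]
  have hfilter : (Finset.range (colWord T).length).filter
      (fun j => ¬ c < (shapeOf (egP ((colWord T).drop ((colWord T).length - j)))).getD i 0)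
      = Finset.range (S + i + 1) := by
    ext j
    simp only [Finset.mem_filter, Finset.mem_range]
    constructor
    · rintro ⟨hj, hnp⟩
      by_contra hcon
      push_neg at hcon
      exact hnp (hmono (S + i + 1) j hcon (by omega) hP)
    · intro hj
      refine ⟨by omega, fun hp => hnotP (hmono j (S + i) (by omega) (by omega) hp)⟩
  rw [hfilter, Finset.card_range]

end Main2


/-- If `T` is a row-and-column strict tableau whose column reading word `τ(T)` is reduced,
then Edelman–Greene insertion recovers `T`: `P(τ(T)) = T`, and each column of the recording
tableau `Q(τ(T))` consists of consecutive integers. -/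
theorem eg_of_column_word (T : List (List ℕ))
    (hrows : ∀ R ∈ T, R ≠ [] ∧ List.Pairwise (· < ·) R)
    (hshape : ∀ r : ℕ, r + 1 < T.length →
      (T.getD (r + 1) []).length ≤ (T.getD r []).length)
    (hcol : ∀ r c : ℕ, r + 1 < T.length → c < (T.getD (r + 1) []).length →
      (T.getD r []).getD c 0 < (T.getD (r + 1) []).getD c 0)
    (hred : IsReducedWord (colWord T)) :
    egP (colWord T) = T ∧
    (∀ r c : ℕ, r + 1 < T.length → c < (T.getD (r + 1) []).length →
      egQfun (colWord T) (r + 1, c) = egQfun (colWord T) (r, c) + 1) := by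
  have hlenmono : ∀ a b, a ≤ b → b < T.length →
      (T.getD b []).length ≤ (T.getD a []).length := by
    refine rel_getD_of_adj [] (fun A B => B.length ≤ A.length) (fun _ => le_refl _)
      (fun h1 h2 => le_trans h2 h1) T ?_
    exact fun i hi => hshape i hi
  constructor
  · exact egP_colWord T hrows hlenmono hcol
  · intro r c hr hc
    have spec := colw_spec c T hlenmono
    have hr1 : r + 1 < (T.filterMap (fun R => R[c]?)).length := (spec.1 (r + 1)).2 hc
    have q1 := egQ_val T hrows hlenmono hcol c (r + 1) hr1
    have q0 := egQ_val T hrows hlenmono hcol c r (by omega)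
    rw [q1, q0]
    omega
end

section
/- Let w be a reduced word and α a Coxeter-Knuth move of type three (x(x+1)x ↔ (x+1)x(x+1)) applied at positions i−1, i, i+1. If during the Edelman-Greene insertion of the triple into a row, the letter x bumps the entry x+1 and the entry following x+1 in that row is forced to be x+2, then the triples passed to the next row are (x+1)(x+2)(x+1) and (x+2)(x+1)(x+2) respectively — i.e., the bumped triples again differ by a Coxeter-Knuth move of type three. -/
lemma fi_aux (x c : ℕ) (A B : List ℕ) (hA : ∀ a ∈ A, a ≤ x) (hc : x < c) :
    (A ++ c :: B).findIdx (fun y => decide (x < y)) = A.length := by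
  induction A with
  | nil => simp [List.findIdx_cons, hc]
  | cons a A ih =>
    have ha : ¬ x < a := by have := hA a (by simp); omega
    simp [List.findIdx_cons, ha, ih fun b hb => hA b (by simp [hb])]

lemma getD_mid (c : ℕ) (A B : List ℕ) : (A ++ c :: B).getD A.length 0 = c := by
  rw [List.getD_append_right _ _ _ _ le_rfl]; simp

lemma set_mid (c v : ℕ) (A B : List ℕ) : (A ++ c :: B).set A.length v = A ++ v :: B := by
  induction A with
  | nil => simp
  | cons a A ih => simp [List.set_cons_succ, ih]

lemma all_false (x c : ℕ) (A B : List ℕ) (hc : x < c) :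
    ((A ++ c :: B).all fun y => decide (y ≤ x)) = false := by
  simp only [List.all_eq_false]
  exact ⟨c, by simp, by simp; omega⟩

lemma rowIns_special (x : ℕ) (A B : List ℕ) (hA : ∀ a ∈ A, a ≤ x) :
    rowIns x (A ++ x :: (x + 1) :: B) = (A ++ x :: (x + 1) :: B, some (x + 1)) := by
  have hA' : ∀ a ∈ A ++ [x], a ≤ x := by
    intro a ha; rcases List.mem_append.1 ha with h | h
    · exact hA a h
    · simp at h; omega
  have hj : (A ++ x :: (x + 1) :: B).findIdx (fun y => decide (x < y)) = A.length + 1 := by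
    have := fi_aux x (x + 1) (A ++ [x]) B hA' (by omega)
    simpa using this
  have hall : ((A ++ x :: (x + 1) :: B).all fun y => decide (y ≤ x)) = false := by
    have := all_false x (x + 1) (A ++ [x]) B (by omega)
    simpa using this
  have h1 : (A ++ x :: (x + 1) :: B).getD (A.length + 1) 0 = x + 1 := by
    have := getD_mid (x + 1) (A ++ [x]) B
    simpa using this
  have h2 : (A ++ x :: (x + 1) :: B).getD A.length 0 = x := getD_mid x A _
  rw [rowIns, hall]
  simp only [Bool.false_eq_true, if_false, hj, Nat.add_sub_cancel]
  rw [if_pos ⟨h1, Nat.succ_pos _, h2⟩]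

lemma rowIns_normal (x c : ℕ) (A B : List ℕ) (hA : ∀ a ∈ A, a ≤ x) (hc : x < c)
    (hlast : A.getLast? ≠ some x) :
    rowIns x (A ++ c :: B) = (A ++ x :: B, some c) := by
  have hj : (A ++ c :: B).findIdx (fun y => decide (x < y)) = A.length := fi_aux x c A B hA hc
  have hall : ((A ++ c :: B).all fun y => decide (y ≤ x)) = false := all_false x c A B hc
  have h1 : (A ++ c :: B).getD A.length 0 = c := getD_mid c A B
  have hcond : ¬((A ++ c :: B).getD A.length 0 = x + 1 ∧ 0 < A.length ∧
      (A ++ c :: B).getD (A.length - 1) 0 = x) := by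
    rcases A.eq_nil_or_concat with rfl | ⟨A', a, hAc⟩
    · simp
    · rw [List.concat_eq_append] at hAc
      subst hAc
      have ha : a ≠ x := by
        intro h; exact hlast (by rw [h]; exact List.getLast?_concat)
      have h2 : ((A' ++ [a]) ++ c :: B).getD ((A' ++ [a]).length - 1) 0 = a := by
        have := getD_mid a A' (c :: B)
        simpa using this
      rw [h2]
      tauto
  rw [rowIns, hall]
  simp only [Bool.false_eq_true, if_false, hj]
  rw [if_neg hcond, h1, set_mid]

/-- Propagation of a type-three Coxeter–Knuth pattern through one row of Edelman–Greene
insertion.  Suppose `R` is a strictly increasing row, `x` bumps the entry `x+1` of `R`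
(that is, the first entry of `R` exceeding `x` is `x+1`), and the entry following that
`x+1` is `x+2`.  Then inserting `x, x+1, x` successively into `R` bumps the triple
`x+1, x+2, x+1` to the next row, while inserting `x+1, x, x+1` successively into `R`
bumps the triple `x+2, x+1, x+2`: the bumped triples again differ by a Coxeter–Knuth
move of type three. -/
theorem type_three_propagates (x : ℕ) (R : List ℕ)
    (hs : List.Pairwise (· < ·) R)
    (hlen : R.findIdx (fun y => decide (x < y)) + 1 < R.length)
    (hbump : R.getD (R.findIdx (fun y => decide (x < y))) 0 = x + 1)
    (hnext : R.getD (R.findIdx (fun y => decide (x < y)) + 1) 0 = x + 2) :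
    ((rowIns x R).2 = some (x + 1) ∧
     (rowIns (x + 1) (rowIns x R).1).2 = some (x + 2) ∧
     (rowIns x (rowIns (x + 1) (rowIns x R).1).1).2 = some (x + 1)) ∧
    ((rowIns (x + 1) R).2 = some (x + 2) ∧
     (rowIns x (rowIns (x + 1) R).1).2 = some (x + 1) ∧
     (rowIns (x + 1) (rowIns x (rowIns (x + 1) R).1).1).2 = some (x + 2)) := by
  set j := R.findIdx (fun y => decide (x < y)) with hjdef
  have hjlt : j < R.length := by omega
  have hj1lt : j + 1 < R.length := hlen
  have hb : R[j] = x + 1 := by rw [← List.getD_eq_getElem _ 0 hjlt]; exact hbump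
  have hn : R[j + 1] = x + 2 := by rw [← List.getD_eq_getElem _ 0 hj1lt]; exact hnext
  have hR : R = R.take j ++ (x + 1) :: (x + 2) :: R.drop (j + 2) := by
    conv_lhs => rw [← List.take_append_drop j R]
    rw [List.drop_eq_getElem_cons hjlt, hb, List.drop_eq_getElem_cons hj1lt, hn]
  set A := R.take j with hAdef
  have hlenA : A.length = j := by
    simp [hAdef, List.length_take, Nat.min_eq_left hjlt.le]
  have hA : ∀ a ∈ A, a ≤ x := by
    intro a ha
    obtain ⟨i, hi, rfl⟩ := List.getElem_of_mem ha
    have hij : i < j := by omega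
    have := List.not_of_lt_findIdx (p := fun y => decide (x < y)) (xs := R) (i := i)
      (by omega)
    have hAi : A[i] = R[i] := by
      simp [hAdef, List.getElem_take]
    rw [hAi]
    simpa using this
  set B := R.drop (j + 2) with hBdef
  rcases A.eq_nil_or_concat with hAn | ⟨A', a, hAc⟩
  · -- A = [] : normal-bump case with empty prefix
    have hlast : A.getLast? ≠ some x := by rw [hAn]; simp
    have s1 : rowIns x R = (A ++ x :: (x + 2) :: B, some (x + 1)) := by
      rw [hR]; exact rowIns_normal x (x + 1) A ((x + 2) :: B) hA (by omega) hlast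
    have s2 : rowIns (x + 1) (A ++ x :: (x + 2) :: B) =
        (A ++ x :: (x + 1) :: B, some (x + 2)) := by
      have := rowIns_normal (x + 1) (x + 2) (A ++ [x]) B
        (by intro b hb; rcases List.mem_append.1 hb with h | h
            · exact (hA b h).trans (by omega)
            · simp at h; omega)
        (by omega) (by rw [List.getLast?_concat]; simp)
      simpa using this
    have s3 : rowIns x (A ++ x :: (x + 1) :: B) =
        (A ++ x :: (x + 1) :: B, some (x + 1)) := rowIns_special x A B hA
    have t1 : rowIns (x + 1) R = (R, some (x + 2)) := by
      conv_lhs => rw [hR]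
      rw [rowIns_special (x + 1) A B (fun b hb => (hA b hb).trans (by omega)), ← hR]
    refine ⟨⟨by rw [s1], by rw [s1, s2], by rw [s1, s2, s3]⟩,
      ⟨by rw [t1], by rw [t1, s1], by rw [t1, s1, s2]⟩⟩
  · rw [List.concat_eq_append] at hAc
    rcases eq_or_ne a x with hax | hax
    · -- A ends with x : special-bump case
      rw [hax] at hAc
      have hA' : ∀ b ∈ A', b ≤ x := fun b hb => hA b (by rw [hAc]; simp [hb])
      have s1 : rowIns x R = (R, some (x + 1)) := by
        conv_lhs => rw [hR, hAc]
        rw [show (A' ++ [x]) ++ (x + 1) :: (x + 2) :: B = A' ++ x :: (x + 1) :: ((x + 2) :: B) by simp]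
        rw [rowIns_special x A' ((x + 2) :: B) hA']
        rw [show A' ++ x :: (x + 1) :: ((x + 2) :: B) = (A' ++ [x]) ++ (x + 1) :: (x + 2) :: B by simp, ← hAc, ← hR]
      have t1 : rowIns (x + 1) R = (R, some (x + 2)) := by
        conv_lhs => rw [hR]
        rw [rowIns_special (x + 1) A B (fun b hb => (hA b hb).trans (by omega)), ← hR]
      refine ⟨⟨by rw [s1], by rw [s1, t1], by rw [s1, t1, s1]⟩,
        ⟨by rw [t1], by rw [t1, s1], by rw [t1, s1, t1]⟩⟩
    · -- A ends with a ≠ x : normal-bump case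
      have hlast : A.getLast? ≠ some x := by
        rw [hAc, List.getLast?_concat]; simpa using hax
      have s1 : rowIns x R = (A ++ x :: (x + 2) :: B, some (x + 1)) := by
        rw [hR]; exact rowIns_normal x (x + 1) A ((x + 2) :: B) hA (by omega) hlast
      have s2 : rowIns (x + 1) (A ++ x :: (x + 2) :: B) =
          (A ++ x :: (x + 1) :: B, some (x + 2)) := by
        have := rowIns_normal (x + 1) (x + 2) (A ++ [x]) B
          (by intro b hb; rcases List.mem_append.1 hb with h | h
              · exact (hA b h).trans (by omega)
              · simp at h; omega)
          (by omega) (by rw [List.getLast?_concat]; simp)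
        simpa using this
      have s3 : rowIns x (A ++ x :: (x + 1) :: B) =
          (A ++ x :: (x + 1) :: B, some (x + 1)) := rowIns_special x A B hA
      have t1 : rowIns (x + 1) R = (R, some (x + 2)) := by
        conv_lhs => rw [hR]
        rw [rowIns_special (x + 1) A B (fun b hb => (hA b hb).trans (by omega)), ← hR]
      refine ⟨⟨by rw [s1], by rw [s1, s2], by rw [s1, s2, s3]⟩,
        ⟨by rw [t1], by rw [t1, s1], by rw [t1, s1, s2]⟩⟩
end
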